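/- arXiv:1511.03547 — 2 statements merged into one kernel-verified Lean document; each statement's English description precedes it below -/
import Mathlib

section
/- Let U ⊆ S^m_d be a quasi-stable monomial module and G a P(U)-marked set. The following conditions are equivalent: (i) G is a P(U)-marked basis, i.e. (S^m_d)_s = ⟨G⟩_s ⊕ ⟨N(U)_s⟩^A for every degree s; (ii) ⟨G⟩_s = ⟨G^{(s)}⟩^A for every degree s; (iii) N(U,⟨G⟩) = ⟨G⟩ ∩ ⟨N(U)⟩ = {0}. -/
open MvPolynomial

namespace MB

/-- Exponent (multi-index) of a term in the variables `x_0, …, x_n`. -/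
abbrev Exp (n : ℕ) := Fin (n+1) →₀ ℕ

variable {n : ℕ}

/-- Total degree of a term. -/
def degE (α : Exp n) : ℕ := α.sum fun _ e => e

/-- `x_i` is a multiplicative variable for the term `x^α`, i.e. `x_i ≤ min(x^α)`. -/
def mult (α : Exp n) (i : Fin (n+1)) : Prop := ∀ j ∈ α.support, i ≤ j

/-- Every variable occurring in `x^δ` is multiplicative for `x^α`. -/
def multExp (α δ : Exp n) : Prop := ∀ i ∈ δ.support, mult α i

/-- Pommaret cone of a term. -/
def pommaretCone (α : Exp n) : Set (Exp n) := {γ | ∃ δ, multExp α δ ∧ γ = α + δ}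

/-- A set of terms is (the set of terms of) a monomial ideal. -/
def IsMonomialIdeal (T : Set (Exp n)) : Prop := ∀ α ∈ T, ∀ β, α + β ∈ T

/-- `P` is a Pommaret basis of the set of terms `T`: the terms of `T` are the
disjoint union of the Pommaret cones of the elements of `P`. -/
def IsPommaretBasis (P : Finset (Exp n)) (T : Set (Exp n)) : Prop :=
  (∀ γ, γ ∈ T ↔ ∃ α ∈ P, γ ∈ pommaretCone α) ∧
  ∀ γ : Exp n, ∀ α ∈ P, ∀ β ∈ P, γ ∈ pommaretCone α → γ ∈ pommaretCone β → α = β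

/-- Lexicographic order on terms (with `x_n > … > x_0` significance). -/
def lexLt (η δ : Exp n) : Prop := ∃ i, η i < δ i ∧ ∀ j, i < j → η j = δ j

/-- Terms of the saturation `(J : (x_0,…,x_n)^∞)` of a monomial ideal. -/
def satTerms (T : Set (Exp n)) : Set (Exp n) :=
  {α | ∃ j : ℕ, ∀ β : Exp n, degE β = j → α + β ∈ T}

section ModuleDefs

variable (A : Type*) [CommRing A] {κ : Type*} [Fintype κ] [DecidableEq κ]

/-- The term `x^α e_k` of the free module. -/
noncomputable def termV (α : Exp n) (k : κ) : κ → MvPolynomial (Fin (n+1)) A :=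
  Pi.single k (monomial α 1)

variable {A}

/-- Homogeneity of degree `s` in `S^m_d` (with weight vector `d`). -/
def IsHomogV (d : κ → ℤ) (f : κ → MvPolynomial (Fin (n+1)) A) (s : ℤ) : Prop :=
  ∀ k, ∀ β ∈ (f k).support, (degE β : ℤ) + d k = s

variable (A)

/-- The degree-`s` component `(S^m_d)_s` as an `A`-submodule. -/
noncomputable def homogCompV (d : κ → ℤ) (s : ℤ) :
    Submodule A (κ → MvPolynomial (Fin (n+1)) A) where
  carrier := {f | IsHomogV d f s}
  add_mem' := by
    intro f g hf hg k β hβ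
    rcases Finset.mem_union.mp (MvPolynomial.support_add hβ) with h | h
    · exact hf k β h
    · exact hg k β h
  zero_mem' := by intro k β hβ; simp at hβ
  smul_mem' := by
    intro a f hf k β hβ
    exact hf k β (MvPolynomial.support_smul hβ)

/-- The set `N(U)` of terms of `S^m_d` not belonging to the monomial module `U = ⊕ J^(k) e_k`. -/
def NUTerms (J : κ → Set (Exp n)) : Set (κ → MvPolynomial (Fin (n+1)) A) :=
  {v | ∃ k, ∃ α, α ∉ J k ∧ v = termV A α k}

/-- The degree-`s` part `N(U)_s`. -/
def NUTermsDeg (d : κ → ℤ) (J : κ → Set (Exp n)) (s : ℤ) :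
    Set (κ → MvPolynomial (Fin (n+1)) A) :=
  {v | ∃ k, ∃ α, α ∉ J k ∧ (degE α : ℤ) + d k = s ∧ v = termV A α k}

variable {A}

/-- A `P(U)`-marked set: for each `x^α e_k` with `α ∈ P k`, the element `g α k` has
head term `x^α e_k` (coefficient `1`) and all other terms in `N(U)` of the same degree. -/
def IsMarkedSetV (d : κ → ℤ) (J : κ → Set (Exp n)) (P : κ → Finset (Exp n))
    (g : Exp n → κ → (κ → MvPolynomial (Fin (n+1)) A)) : Prop :=
  ∀ k, ∀ α ∈ P k, ∀ l, ∀ β ∈ ((g α k - termV A α k) l).support,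
    β ∉ J l ∧ (degE β : ℤ) + d l = (degE α : ℤ) + d k

/-- The underlying set of elements of the marked set `G`. -/
def GSet (P : κ → Finset (Exp n)) (g : Exp n → κ → (κ → MvPolynomial (Fin (n+1)) A)) :
    Set (κ → MvPolynomial (Fin (n+1)) A) :=
  {v | ∃ k, ∃ α ∈ P k, v = g α k}

/-- The set `G^(s)` of multiplicative multiples of elements of `G` of degree `s`. -/
def GSdeg (d : κ → ℤ) (P : κ → Finset (Exp n))
    (g : Exp n → κ → (κ → MvPolynomial (Fin (n+1)) A)) (s : ℤ) :
    Set (κ → MvPolynomial (Fin (n+1)) A) :=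
  {v | ∃ k, ∃ α ∈ P k, ∃ δ : Exp n, multExp α δ ∧
    (degE δ : ℤ) + (degE α : ℤ) + d k = s ∧ v = (monomial δ (1:A)) • g α k}

/-- The `S`-submodule `⟨G⟩` generated by the marked set. -/
noncomputable def GmodS (P : κ → Finset (Exp n))
    (g : Exp n → κ → (κ → MvPolynomial (Fin (n+1)) A)) :
    Submodule (MvPolynomial (Fin (n+1)) A) (κ → MvPolynomial (Fin (n+1)) A) :=
  Submodule.span _ (GSet P g)

/-- The degree-`s` component `⟨G⟩_s` as an `A`-submodule. -/
noncomputable def GmodDeg (d : κ → ℤ) (P : κ → Finset (Exp n))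
    (g : Exp n → κ → (κ → MvPolynomial (Fin (n+1)) A)) (s : ℤ) :
    Submodule A (κ → MvPolynomial (Fin (n+1)) A) :=
  (GmodS P g).restrictScalars A ⊓ homogCompV A d s

/-- `G` is a marked basis: `(S^m_d)_s = ⟨G⟩_s ⊕ ⟨N(U)_s⟩^A` for every degree `s`. -/
def MarkedBasisProp (d : κ → ℤ) (J : κ → Set (Exp n)) (P : κ → Finset (Exp n))
    (g : Exp n → κ → (κ → MvPolynomial (Fin (n+1)) A)) : Prop :=
  ∀ s : ℤ,
    homogCompV A d s = GmodDeg d P g s ⊔ Submodule.span A (NUTermsDeg A d J s) ∧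
    GmodDeg d P g s ⊓ Submodule.span A (NUTermsDeg A d J s) = ⊥

/-- One step of the reduction relation `→_G`. -/
def RedStep (P : κ → Finset (Exp n)) (g : Exp n → κ → (κ → MvPolynomial (Fin (n+1)) A))
    (h h' : κ → MvPolynomial (Fin (n+1)) A) : Prop :=
  ∃ k, ∃ α ∈ P k, ∃ η : Exp n, multExp α η ∧
    (h k).coeff (η + α) ≠ 0 ∧
    h' = h - ((h k).coeff (η + α)) • ((monomial η (1:A)) • g α k)

end ModuleDefs

section IdealDefs

variable {A : Type*} [CommRing A]

/-- A `P(J)`-marked set of polynomials. -/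
def IsMarkedSetI (T : Set (Exp n)) (P : Finset (Exp n))
    (g : Exp n → MvPolynomial (Fin (n+1)) A) : Prop :=
  ∀ α ∈ P, ∀ β ∈ (g α - monomial α (1:A)).support, β ∉ T ∧ degE β = degE α

variable (A)

/-- The degree-`s` monomials not in `T`. -/
def NTermsDegI (T : Set (Exp n)) (s : ℕ) : Set (MvPolynomial (Fin (n+1)) A) :=
  {p | ∃ β, β ∉ T ∧ degE β = s ∧ p = monomial β (1:A)}

variable {A}

/-- Degree-`s` part of the ideal generated by the marked set. -/
noncomputable def IdealDegI (P : Finset (Exp n)) (g : Exp n → MvPolynomial (Fin (n+1)) A)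
    (s : ℕ) : Submodule A (MvPolynomial (Fin (n+1)) A) :=
  (Ideal.span (g '' ↑P)).restrictScalars A ⊓ homogeneousSubmodule (Fin (n+1)) A s

/-- A `P(J)`-marked basis of polynomials: `S_s = (G)_s ⊕ ⟨N(J)_s⟩^A` for all `s`. -/
def IsMarkedBasisI (T : Set (Exp n)) (P : Finset (Exp n))
    (g : Exp n → MvPolynomial (Fin (n+1)) A) : Prop :=
  IsMarkedSetI T P g ∧ ∀ s : ℕ,
    homogeneousSubmodule (Fin (n+1)) A s
      = IdealDegI P g s ⊔ Submodule.span A (NTermsDegI A T s) ∧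
    IdealDegI P g s ⊓ Submodule.span A (NTermsDegI A T s) = ⊥

/-- The polynomial `p` involves only multiplicative variables of `x^α`. -/
def multPoly (α : Exp n) (p : MvPolynomial (Fin (n+1)) A) : Prop :=
  ∀ β ∈ p.support, multExp α β

end IdealDefs

section SyzDefs

variable {A : Type*} [CommRing A]

/-- The map `(c_l) ↦ Σ_l c_l f_{α(l)}` whose kernel is `Syz(G)`. -/
noncomputable def syzMap (P : Finset (Exp n)) (g : Exp n → MvPolynomial (Fin (n+1)) A) :
    (↥P → MvPolynomial (Fin (n+1)) A) →ₗ[MvPolynomial (Fin (n+1)) A]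
      MvPolynomial (Fin (n+1)) A where
  toFun c := ∑ l : ↥P, c l * g l.1
  map_add' c c' := by simp [add_mul, Finset.sum_add_distrib]
  map_smul' a c := by simp [Finset.mul_sum, mul_assoc]

/-- Weight vector for the syzygy module: `d_l = deg x^{α(l)}`. -/
def ddeg (P : Finset (Exp n)) : ↥P → ℤ := fun l => (degE l.1 : ℤ)

/-- Terms of the monomial ideal generated by the nonmultiplicative variables of `x^{α(l)}`. -/
def Jsyz (P : Finset (Exp n)) : ↥P → Set (Exp n) :=
  fun l => {β | ∃ i ∈ β.support, ¬ mult (l : Exp n) i}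

open Classical in
/-- The claimed Pommaret basis `{x_i e_l : x_i nonmultiplicative for x^{α(l)}}`. -/
noncomputable def Psyz (P : Finset (Exp n)) : ↥P → Finset (Exp n) := fun l =>
  (Finset.univ.filter fun i : Fin (n+1) => ¬ mult (l : Exp n) i).image
    fun i => Finsupp.single i 1

open Classical in
/-- The syzygy `S_{k;i} = x_i e_k − Σ_l P_l^{k;i} e_l`. -/
noncomputable def Ssyz (P : Finset (Exp n))
    (Pc : ↥P → Fin (n+1) → ↥P → MvPolynomial (Fin (n+1)) A)
    (k : ↥P) (i : Fin (n+1)) : ↥P → MvPolynomial (Fin (n+1)) A :=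
  fun l => (if l = k then (X i : MvPolynomial (Fin (n+1)) A) else 0) - Pc k i l

/-- The set `G_Syz^(s)`. -/
def GSyzDeg (P : Finset (Exp n))
    (Pc : ↥P → Fin (n+1) → ↥P → MvPolynomial (Fin (n+1)) A) (s : ℤ) :
    Set (↥P → MvPolynomial (Fin (n+1)) A) :=
  {v | ∃ k : ↥P, ∃ i : Fin (n+1), ¬ mult (k : Exp n) i ∧ ∃ δ : Exp n,
    (∀ j ∈ δ.support, j ≤ i) ∧ (degE δ : ℤ) + 1 + ddeg P k = s ∧
    v = (monomial δ (1:A)) • Ssyz P Pc k i}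

end SyzDefs


/-! ### Auxiliary lemmas for statement8 -/

section AuxLex

variable {n : ℕ}

/-- Transfer of `lexLt` to Mathlib's lexicographic order via index reversal. -/
noncomputable def toL (η : Exp n) : Lex (Fin (n+1) →₀ ℕ) :=
  toLex (Finsupp.equivMapDomain (Fin.revPerm) η)

lemma ofLex_toL (η : Exp n) (j : Fin (n+1)) : ofLex (toL η) j = η j.rev := by
  simp [toL, Finsupp.equivMapDomain_apply]

lemma lexLt_iff {η δ : Exp n} : lexLt η δ ↔ toL η < toL δ := by
  rw [Finsupp.Lex.lt_iff]
  constructor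
  · rintro ⟨i, hlt, heq⟩
    refine ⟨i.rev, fun j hj => ?_, ?_⟩
    · rw [ofLex_toL, ofLex_toL]
      exact heq j.rev (by rwa [← Fin.rev_lt_rev, Fin.rev_rev] at hj)
    · rw [ofLex_toL, ofLex_toL, Fin.rev_rev]; exact hlt
  · rintro ⟨i, heq, hlt⟩
    refine ⟨i.rev, by rwa [ofLex_toL, ofLex_toL] at hlt, fun j hj => ?_⟩
    have hj' : j.rev < i := by simpa [Fin.rev_rev] using Fin.rev_lt_rev.mpr hj
    have := heq j.rev hj'
    rwa [ofLex_toL, ofLex_toL, Fin.rev_rev] at this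

lemma toL_inj {η δ : Exp n} (h : toL η = toL δ) : η = δ := by
  ext j
  have h2 : ofLex (toL η) j.rev = ofLex (toL δ) j.rev := by rw [h]
  simpa [ofLex_toL, Fin.rev_rev] using h2

lemma lexLt_trichotomy (η δ : Exp n) : lexLt η δ ∨ η = δ ∨ lexLt δ η := by
  rcases lt_trichotomy (toL η) (toL δ) with h | h | h
  · exact Or.inl (lexLt_iff.mpr h)
  · exact Or.inr (Or.inl (toL_inj h))
  · exact Or.inr (Or.inr (lexLt_iff.mpr h))

lemma lexLt_wf : WellFounded (lexLt (n := n)) := by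
  have h : WellFounded ((· < ·) : Lex (Fin (n+1) →₀ ℕ) → Lex (Fin (n+1) →₀ ℕ) → Prop) :=
    (Finsupp.Lex.wellFoundedLT).wf
  exact Subrelation.wf (fun {a b} hab => lexLt_iff.mp hab) (InvImage.wf toL h)

lemma degE_add (α β : Exp n) : degE (α + β) = degE α + degE β := by
  simpa [degE] using Finsupp.sum_add_index' (by simp) (by simp)

lemma degE_eq_degree (α : Exp n) : degE α = α.degree := rfl

end AuxLex

section AuxPommaret

variable {n : ℕ}

open Classical in
/-- Pommaret decomposition of a term of a quasi-stable monomial ideal. -/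
noncomputable def pDec (P : Finset (Exp n)) (γ : Exp n) : Exp n × Exp n :=
  if h : ∃ p : Exp n × Exp n, p.1 ∈ P ∧ multExp p.1 p.2 ∧ γ = p.1 + p.2 then h.choose
  else (0, 0)

lemma multExp_zero (α : Exp n) : multExp α 0 := by
  intro i hi; simp at hi

lemma mem_T_of_cone {P : Finset (Exp n)} {T : Set (Exp n)} (hP : IsPommaretBasis P T)
    {α δ : Exp n} (hα : α ∈ P) (hm : multExp α δ) : α + δ ∈ T :=
  (hP.1 (α + δ)).mpr ⟨α, hα, δ, hm, rfl⟩

lemma P_sub_T {P : Finset (Exp n)} {T : Set (Exp n)} (hP : IsPommaretBasis P T)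
    {α : Exp n} (hα : α ∈ P) : α ∈ T := by
  simpa using mem_T_of_cone hP hα (multExp_zero α)

lemma pDec_spec {P : Finset (Exp n)} {T : Set (Exp n)} (hP : IsPommaretBasis P T)
    {γ : Exp n} (h : γ ∈ T) :
    (pDec P γ).1 ∈ P ∧ multExp (pDec P γ).1 (pDec P γ).2 ∧ γ = (pDec P γ).1 + (pDec P γ).2 := by
  obtain ⟨α, hα, δ, hm, he⟩ := (hP.1 γ).mp h
  have hex : ∃ p : Exp n × Exp n, p.1 ∈ P ∧ multExp p.1 p.2 ∧ γ = p.1 + p.2 :=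
    ⟨(α, δ), hα, hm, he⟩
  have : pDec P γ = hex.choose := by rw [pDec, dif_pos hex]
  rw [this]
  exact hex.choose_spec

lemma pDec_eq {P : Finset (Exp n)} {T : Set (Exp n)} (hP : IsPommaretBasis P T)
    {γ α δ : Exp n} (hα : α ∈ P) (hm : multExp α δ) (he : γ = α + δ) :
    pDec P γ = (α, δ) := by
  have hT : γ ∈ T := he ▸ mem_T_of_cone hP hα hm
  obtain ⟨h1, h2, h3⟩ := pDec_spec hP hT
  have hcone1 : γ ∈ pommaretCone (pDec P γ).1 := ⟨(pDec P γ).2, h2, h3⟩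
  have hcone2 : γ ∈ pommaretCone α := ⟨δ, hm, he⟩
  have hae : (pDec P γ).1 = α := hP.2 γ _ h1 _ hα hcone1 hcone2
  have hde : (pDec P γ).2 = δ := by
    rw [hae] at h3
    have h5 : α + δ = α + (pDec P γ).2 := by rw [← he]; exact h3
    exact (add_right_injective α h5).symm
  exact Prod.ext hae hde

/-- The key combinatorial lemma: reducing a term of `N(J)` multiplied by a monomial
produces a strictly lex-smaller Pommaret cofactor. -/
lemma keyD {P : Finset (Exp n)} {T : Set (Exp n)} (hI : IsMonomialIdeal T)
    (hP : IsPommaretBasis P T) {β δ : Exp n} (hβ : β ∉ T) (hJ : δ + β ∈ T) :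
    lexLt (pDec P (δ + β)).2 δ := by
  obtain ⟨hα, hm, he⟩ := pDec_spec hP hJ
  set α' := (pDec P (δ + β)).1 with hα'def
  set δ' := (pDec P (δ + β)).2 with hδ'def
  rcases lexLt_trichotomy δ' δ with h | h | h
  · exact h
  · -- δ' = δ forces β = α' ∈ T, contradiction
    exfalso
    apply hβ
    have : δ + β = α' + δ := by rw [he, h]
    have hβα : β = α' := by
      have := this.symm
      rw [add_comm α' δ] at this
      exact (add_right_injective δ this).symm
    rw [hβα]; exact P_sub_T hP hα
  · -- lexLt δ δ' forces β ∈ T, contradiction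
    exfalso
    obtain ⟨i, hi, habove⟩ := h
    have hisupp : i ∈ δ'.support := Finsupp.mem_support_iff.mpr (by omega)
    have hmult : mult α' i := hm i hisupp
    have hle : α' ≤ β := by
      rw [Finsupp.le_def]
      intro j
      rcases lt_trichotomy i j with hj | hj | hj
      · have hcoord : δ j + β j = α' j + δ' j := by
          have := congrArg (fun x => x j) he
          simpa [Finsupp.add_apply] using this
        have := habove j hj
        omega
      · have hcoord : δ i + β i = α' i + δ' i := by
          have := congrArg (fun x => x i) he
          simpa [Finsupp.add_apply] using this
        rw [← hj]
        omega
      · -- j < i : α' j = 0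
        have : α' j = 0 := by
          by_contra hne
          have : j ∈ α'.support := Finsupp.mem_support_iff.mpr hne
          exact absurd (hmult j this) (by omega)
        omega
    apply hβ
    have : α' + (β - α') = β := by
      rw [add_comm]; exact tsub_add_cancel_of_le hle
    rw [← this]
    exact hI α' (P_sub_T hP hα) (β - α')

end AuxPommaret

section AuxModule

set_option linter.unusedSectionVars false

variable {n : ℕ} {κ : Type*} [Fintype κ] [DecidableEq κ] {A : Type*} [CommRing A]

lemma mem_homogCompV {d : κ → ℤ} {s : ℤ} {f : κ → MvPolynomial (Fin (n+1)) A} :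
    f ∈ homogCompV A d s ↔ IsHomogV d f s := Iff.rfl

lemma coeff_termV (α : Exp n) (k l : κ) (β : Exp n) :
    ((termV A α k) l).coeff β = if l = k ∧ β = α then 1 else 0 := by
  classical
  rcases eq_or_ne l k with h | h
  · subst h
    rw [termV, Pi.single_eq_same, coeff_monomial]
    by_cases hβ : β = α
    · subst hβ; simp
    · rw [if_neg (Ne.symm hβ), if_neg (by simp [hβ])]
  · rw [termV, Pi.single_eq_of_ne h]
    simp [h]

lemma smul_termV (α : Exp n) (k : κ) (c : A) :
    c • termV A α k = Pi.single k (monomial α c) := by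
  rw [termV, ← Pi.single_smul, smul_monomial, smul_eq_mul, mul_one]

/-- If every term of `v` lies in a submodule, so does `v`. -/
lemma mem_of_support (M : Submodule A (κ → MvPolynomial (Fin (n+1)) A))
    (v : κ → MvPolynomial (Fin (n+1)) A)
    (h : ∀ l β, β ∈ (v l).support → termV A β l ∈ M) : v ∈ M := by
  have hv : v = ∑ l : κ, Pi.single l (v l) := (Finset.univ_sum_single v).symm
  rw [hv]
  refine Submodule.sum_mem _ fun l _ => ?_
  have h1 : Pi.single l (v l) =
      ∑ β ∈ (v l).support, ((v l).coeff β) • termV A β l := by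
    conv_lhs => rw [← support_sum_monomial_coeff (v l)]
    rw [show (Pi.single l (∑ β ∈ (v l).support, monomial β (coeff β (v l))) : κ → MvPolynomial (Fin (n+1)) A)
        = ∑ β ∈ (v l).support, Pi.single l (monomial β (coeff β (v l))) from
      map_sum (LinearMap.single A (fun _ : κ => MvPolynomial (Fin (n+1)) A) l) _ _]
    refine Finset.sum_congr rfl fun β _ => ?_
    rw [smul_termV]
  rw [h1]
  exact Submodule.sum_mem _ fun β hβ => Submodule.smul_mem _ _ (h l β hβ)

/-- The submodule of vectors all of whose terms lie in `N(U)`. -/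
noncomputable def NSuppM (J : κ → Set (Exp n)) : Submodule A (κ → MvPolynomial (Fin (n+1)) A) where
  carrier := {v | ∀ l β, β ∈ (v l).support → β ∉ J l}
  add_mem' := by
    intro f g hf hg l β hβ
    rcases Finset.mem_union.mp (MvPolynomial.support_add hβ) with h | h
    · exact hf l β h
    · exact hg l β h
  zero_mem' := by intro l β hβ; simp at hβ
  smul_mem' := by
    intro a f hf l β hβ
    exact hf l β (MvPolynomial.support_smul hβ)

lemma span_NUTerms_le_NSuppM (J : κ → Set (Exp n)) :
    Submodule.span A (NUTerms A J) ≤ NSuppM J := by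
  rw [Submodule.span_le]
  rintro v ⟨k, α, hα, rfl⟩ l β hβ
  have := MvPolynomial.mem_support_iff.mp hβ
  rw [coeff_termV] at this
  by_cases h : l = k ∧ β = α
  · rcases h with ⟨rfl, rfl⟩; exact hα
  · simp [h] at this

lemma span_NUTermsDeg_le_NSuppM (d : κ → ℤ) (J : κ → Set (Exp n)) (s : ℤ) :
    Submodule.span A (NUTermsDeg A d J s) ≤ NSuppM J := by
  rw [Submodule.span_le]
  rintro v ⟨k, α, hα, hdeg, rfl⟩ l β hβ
  have := MvPolynomial.mem_support_iff.mp hβ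
  rw [coeff_termV] at this
  by_cases h : l = k ∧ β = α
  · rcases h with ⟨rfl, rfl⟩; exact hα
  · simp [h] at this

lemma span_NUTermsDeg_le_homog (d : κ → ℤ) (J : κ → Set (Exp n)) (s : ℤ) :
    Submodule.span A (NUTermsDeg A d J s) ≤ homogCompV A d s := by
  rw [Submodule.span_le]
  rintro v ⟨k, α, hα, hdeg, rfl⟩
  intro l β hβ
  have := MvPolynomial.mem_support_iff.mp hβ
  rw [coeff_termV] at this
  by_cases h : l = k ∧ β = α
  · rcases h with ⟨rfl, rfl⟩; exact hdeg
  · simp [h] at this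

lemma span_NUTermsDeg_le_NUTerms (d : κ → ℤ) (J : κ → Set (Exp n)) (s : ℤ) :
    Submodule.span A (NUTermsDeg A d J s) ≤ Submodule.span A (NUTerms A J) := by
  apply Submodule.span_mono
  rintro v ⟨k, α, hα, hdeg, rfl⟩
  exact ⟨k, α, hα, rfl⟩

end AuxModule

section AuxMarked

set_option linter.unusedSectionVars false

variable {n : ℕ} {κ : Type*} [Fintype κ] [DecidableEq κ] {A : Type*} [CommRing A]
variable {d : κ → ℤ} {J : κ → Set (Exp n)} {P : κ → Finset (Exp n)}
variable {gb : Exp n → κ → (κ → MvPolynomial (Fin (n+1)) A)}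

lemma memJ_of_P (hQS : ∀ k, IsMonomialIdeal (J k) ∧ IsPommaretBasis (P k) (J k))
    {k : κ} {α : Exp n} (hα : α ∈ P k) : α ∈ J k :=
  P_sub_T (hQS k).2 hα

lemma coeff_g_self (hQS : ∀ k, IsMonomialIdeal (J k) ∧ IsPommaretBasis (P k) (J k))
    (hG : IsMarkedSetV d J P gb) {k : κ} {α : Exp n} (hα : α ∈ P k) :
    coeff α ((gb α k) k) = 1 := by
  have h0 : coeff α ((gb α k - termV A α k) k) = 0 := by
    by_contra h
    exact (hG k α hα k α (MvPolynomial.mem_support_iff.mpr h)).1 (memJ_of_P hQS hα)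
  have h1 : (gb α k - termV A α k) k = (gb α k) k - (termV A α k) k := rfl
  rw [h1, coeff_sub, coeff_termV, if_pos ⟨rfl, rfl⟩] at h0
  have := sub_eq_zero.mp h0
  rw [this]

lemma coeff_g_ne (hQS : ∀ k, IsMonomialIdeal (J k) ∧ IsPommaretBasis (P k) (J k))
    (hG : IsMarkedSetV d J P gb) {k : κ} {α : Exp n} (hα : α ∈ P k)
    {l : κ} {β : Exp n} (hβJ : β ∈ J l) (hne : ¬(l = k ∧ β = α)) :
    coeff β ((gb α k) l) = 0 := by
  have h0 : coeff β ((gb α k - termV A α k) l) = 0 := by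
    by_contra h
    exact (hG k α hα l β (MvPolynomial.mem_support_iff.mpr h)).1 hβJ
  have h1 : (gb α k - termV A α k) l = (gb α k) l - (termV A α k) l := rfl
  rw [h1, coeff_sub, coeff_termV, if_neg hne, sub_zero] at h0
  exact h0

lemma g_homog (hG : IsMarkedSetV d J P gb) {k : κ} {α : Exp n} (hα : α ∈ P k) :
    gb α k ∈ homogCompV A d ((degE α : ℤ) + d k) := by
  intro l β hβ
  have h1 : (gb α k) l = (gb α k - termV A α k) l + (termV A α k) l := by
    simp
  rw [h1] at hβ
  rcases Finset.mem_union.mp (MvPolynomial.support_add hβ) with h | h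
  · exact (hG k α hα l β h).2
  · have := MvPolynomial.mem_support_iff.mp h
    rw [coeff_termV] at this
    by_cases hc : l = k ∧ β = α
    · rcases hc with ⟨rfl, rfl⟩; rfl
    · simp [hc] at this

lemma GSdeg_subset_GmodS {s : ℤ} {v : κ → MvPolynomial (Fin (n+1)) A}
    (hv : v ∈ GSdeg d P gb s) : v ∈ GmodS P gb := by
  obtain ⟨k, α, hα, δ, hmult, hdeg, rfl⟩ := hv
  exact Submodule.smul_mem _ _ (Submodule.subset_span ⟨k, α, hα, rfl⟩)

lemma smul_apply_mul (p : MvPolynomial (Fin (n+1)) A)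
    (v : κ → MvPolynomial (Fin (n+1)) A) (l : κ) : (p • v) l = p * v l := rfl

lemma GSdeg_homog (hG : IsMarkedSetV d J P gb) {s : ℤ}
    {v : κ → MvPolynomial (Fin (n+1)) A} (hv : v ∈ GSdeg d P gb s) :
    v ∈ homogCompV A d s := by
  obtain ⟨k, α, hα, δ, hmult, hdeg, rfl⟩ := hv
  intro l β hβ
  rw [smul_apply_mul] at hβ
  have hc := MvPolynomial.mem_support_iff.mp hβ
  rw [coeff_monomial_mul'] at hc
  by_cases hle : δ ≤ β
  · rw [if_pos hle, one_mul] at hc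
    have hmem : β - δ ∈ ((gb α k) l).support := MvPolynomial.mem_support_iff.mpr hc
    have hdi := g_homog hG hα l (β - δ) hmem
    have hβeq : β = (β - δ) + δ := (tsub_add_cancel_of_le hle).symm
    have : degE β = degE (β - δ) + degE δ := by
      conv_lhs => rw [hβeq]
      rw [degE_add]
    rw [← hdeg]
    push_cast
    omega
  · rw [if_neg hle] at hc
    exact absurd rfl hc

lemma span_GSdeg_le_GmodDeg (hG : IsMarkedSetV d J P gb) (s : ℤ) :
    Submodule.span A (GSdeg d P gb s) ≤ GmodDeg d P gb s := by
  rw [Submodule.span_le]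
  intro v hv
  exact ⟨GSdeg_subset_GmodS hv, GSdeg_homog hG hv⟩

/-- Main spanning lemma: every homogeneous element of degree `s` lies in
`⟨G^(s)⟩_A + ⟨N(U)_s⟩_A`. -/
lemma C1 (hQS : ∀ k, IsMonomialIdeal (J k) ∧ IsPommaretBasis (P k) (J k))
    (hG : IsMarkedSetV d J P gb) (s : ℤ) :
    homogCompV A d s ≤
      Submodule.span A (GSdeg d P gb s) ⊔ Submodule.span A (NUTermsDeg A d J s) := by
  set M := Submodule.span A (GSdeg d P gb s) ⊔ Submodule.span A (NUTermsDeg A d J s) with hM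
  -- terms not in U
  have termN : ∀ (k : κ) (γ : Exp n), γ ∉ J k → (degE γ : ℤ) + d k = s →
      termV A γ k ∈ M := by
    intro k γ hγ hdeg
    exact le_sup_right (α := Submodule A (κ → MvPolynomial (Fin (n+1)) A))
      (Submodule.subset_span ⟨k, γ, hγ, hdeg, rfl⟩)
  -- terms in U, by well-founded induction on the lex order of the Pommaret cofactor
  have termT : ∀ (δ0 : Exp n) (k : κ) (γ : Exp n), γ ∈ J k → (degE γ : ℤ) + d k = s →
      (pDec (P k) γ).2 = δ0 → termV A γ k ∈ M := by
    intro δ0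
    induction δ0 using lexLt_wf.induction with
    | _ δ1 IH =>
    intro k γ hγ hdeg hpd
    obtain ⟨hαP, hmult, hdec⟩ := pDec_spec (hQS k).2 hγ
    set α := (pDec (P k) γ).1 with hαdef
    rw [hpd] at hmult hdec
    -- the marked element with head γ
    set w : κ → MvPolynomial (Fin (n+1)) A := (monomial δ1 (1:A)) • gb α k with hw
    have hδ1γ : δ1 ≤ γ := by
      rw [hdec, Finsupp.le_def]
      intro j
      rw [Finsupp.add_apply]
      omega
    have hγδ1 : γ - δ1 = α := by
      rw [hdec]
      ext j
      rw [Finsupp.tsub_apply, Finsupp.add_apply]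
      omega
    have hdegαδ : (degE δ1 : ℤ) + (degE α : ℤ) + d k = s := by
      have : degE γ = degE α + degE δ1 := by rw [hdec, degE_add]
      omega
    have hwG : w ∈ GSdeg d P gb s := ⟨k, α, hαP, δ1, hmult, hdegαδ, rfl⟩
    have hwM : w ∈ M := le_sup_left (α := Submodule A (κ → MvPolynomial (Fin (n+1)) A))
      (Submodule.subset_span hwG)
    -- the difference w - termV γ k
    have hdiff : w - termV A γ k ∈ M := by
      apply mem_of_support
      intro l η hη
      have hcoeff := MvPolynomial.mem_support_iff.mp hη
      have happ : (w - termV A γ k) l = monomial δ1 1 * (gb α k) l - (termV A γ k) l := rfl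
      rw [happ, coeff_sub, coeff_termV] at hcoeff
      by_cases hhead : l = k ∧ η = γ
      · exfalso
        rw [if_pos hhead, hhead.1, hhead.2] at hcoeff
        have : coeff γ (monomial δ1 1 * (gb α k) k) = 1 := by
          rw [coeff_monomial_mul', if_pos hδ1γ, hγδ1, one_mul]
          exact coeff_g_self hQS hG hαP
        rw [this] at hcoeff
        simp at hcoeff
      · rw [if_neg hhead, sub_zero, coeff_monomial_mul'] at hcoeff
        by_cases hle : δ1 ≤ η
        · rw [if_pos hle, one_mul] at hcoeff
          have hηβ : η = δ1 + (η - δ1) := by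
            ext j
            rw [Finsupp.add_apply, Finsupp.tsub_apply]
            have := Finsupp.le_def.mp hle j
            omega
          have hmemβ : η - δ1 ∈ ((gb α k) l).support := MvPolynomial.mem_support_iff.mpr hcoeff
          have hβnh : ¬(l = k ∧ η - δ1 = α) := by
            intro hc
            refine hhead ⟨hc.1, ?_⟩
            rw [hdec, ← hc.2]
            exact hηβ.trans (add_comm δ1 (η - δ1))
          have hβN : η - δ1 ∉ J l := by
            by_contra hβJ
            exact hcoeff (coeff_g_ne hQS hG hαP hβJ hβnh)
          have hβdeg : (degE (η - δ1) : ℤ) + d l = (degE α : ℤ) + d k :=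
            g_homog hG hαP l (η - δ1) hmemβ
          have hηdeg : (degE η : ℤ) + d l = s := by
            have h2 : degE η = degE δ1 + degE (η - δ1) := by
              conv_lhs => rw [hηβ]
              rw [degE_add]
            omega
          by_cases hηJ : η ∈ J l
          · have hkey : lexLt (pDec (P l) (δ1 + (η - δ1))).2 δ1 :=
              keyD (hQS l).1 (hQS l).2 hβN (by rw [← hηβ]; exact hηJ)
            rw [← hηβ] at hkey
            exact IH _ hkey l η hηJ hηdeg rfl
          · exact termN l η hηJ hηdeg
        · rw [if_neg hle] at hcoeff
          exact absurd rfl hcoeff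
    have : termV A γ k = w - (w - termV A γ k) := by ring
    rw [this]
    exact sub_mem hwM hdiff
  -- now decompose an arbitrary homogeneous element
  intro f hf
  apply mem_of_support
  intro l β hβ
  have hdeg : (degE β : ℤ) + d l = s := hf l β hβ
  by_cases hβJ : β ∈ J l
  · exact termT _ l β hβJ hdeg rfl
  · exact termN l β hβJ hdeg

end AuxMarked

section AuxIndep

set_option linter.unusedSectionVars false

variable {n : ℕ} {κ : Type*} [Fintype κ] [DecidableEq κ] {A : Type*} [CommRing A]
variable {d : κ → ℤ} {J : κ → Set (Exp n)} {P : κ → Finset (Exp n)}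
variable {gb : Exp n → κ → (κ → MvPolynomial (Fin (n+1)) A)}

/-- Linear independence-type lemma: an `A`-combination of elements of `G^(s)` which is
supported entirely on `N(U)` must vanish. -/
lemma L4 (hm : Nonempty κ)
    (hQS : ∀ k, IsMonomialIdeal (J k) ∧ IsPommaretBasis (P k) (J k))
    (hG : IsMarkedSetV d J P gb) (s : ℤ) {v : κ → MvPolynomial (Fin (n+1)) A}
    (hv : v ∈ Submodule.span A (GSdeg d P gb s)) (hN : v ∈ NSuppM J) : v = 0 := by
  classical
  obtain ⟨c, hcs, hsum⟩ := Submodule.mem_span_set.mp hv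
  rcases Finset.eq_empty_or_nonempty c.support with hemp | hne
  · rw [← hsum, Finsupp.sum, hemp, Finset.sum_empty]
  · exfalso
    have hdata : ∀ x : (κ → MvPolynomial (Fin (n+1)) A), ∃ (kx : κ) (αx δx : Exp n),
        x ∈ c.support → (αx ∈ P kx ∧ multExp αx δx ∧
          (degE δx : ℤ) + (degE αx : ℤ) + d kx = s ∧ x = (monomial δx (1:A)) • gb αx kx) := by
      intro x
      by_cases hx : x ∈ c.support
      · obtain ⟨k, α, hα, δ, hmu, hdeg, hxe⟩ := hcs hx
        exact ⟨k, α, δ, fun _ => ⟨hα, hmu, hdeg, hxe⟩⟩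
      · exact ⟨Classical.arbitrary κ, 0, 0, fun h => absurd h hx⟩
    choose kf αf δf hf using hdata
    obtain ⟨x0, hx0, hmax⟩ := Finset.exists_max_image c.support (fun x => toL (δf x)) hne
    obtain ⟨hα0, hm0, hdeg0, hx0e⟩ := hf x0 hx0
    set k0 := kf x0 with hk0def
    set γ0 := αf x0 + δf x0 with γ0def
    have hγ0J : γ0 ∈ J k0 := mem_T_of_cone (hQS k0).2 hα0 hm0
    have hvc : coeff γ0 (v k0) = 0 := by
      by_contra h
      exact hN k0 γ0 (MvPolynomial.mem_support_iff.mpr h) hγ0J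
    have hvsum : v k0 = ∑ x ∈ c.support, c x • (x k0) := by
      rw [← hsum, Finsupp.sum, Finset.sum_apply]
      rfl
    have hcoeffsum : coeff γ0 (v k0) = ∑ x ∈ c.support, c x * coeff γ0 (x k0) := by
      rw [hvsum, MvPolynomial.coeff_sum]
      refine Finset.sum_congr rfl fun x _ => ?_
      rw [MvPolynomial.coeff_smul, smul_eq_mul]
    have hpd0 : pDec (P k0) γ0 = (αf x0, δf x0) :=
      pDec_eq (hQS k0).2 hα0 hm0 γ0def
    have hterm : ∀ x ∈ c.support, c x * coeff γ0 (x k0) = if x = x0 then c x else 0 := by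
      intro x hx
      obtain ⟨hαx, hmx, hdegx, hxe⟩ := hf x hx
      by_cases hxx : x = x0
      · rw [if_pos hxx, hxx]
        have hle0 : δf x0 ≤ γ0 := by
          rw [γ0def, Finsupp.le_def]
          intro j
          rw [Finsupp.add_apply]
          omega
        have hsub0 : γ0 - δf x0 = αf x0 := by
          rw [γ0def]
          ext j
          rw [Finsupp.tsub_apply, Finsupp.add_apply]
          omega
        have h1 : coeff γ0 (x0 k0) = 1 := by
          rw [hx0e, smul_apply_mul, coeff_monomial_mul', if_pos hle0, hsub0, one_mul]
          exact coeff_g_self hQS hG hα0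
        rw [h1, mul_one]
      · rw [if_neg hxx]
        have h0 : coeff γ0 (x k0) = 0 := by
          rw [hxe, smul_apply_mul, coeff_monomial_mul']
          by_cases hle : δf x ≤ γ0
          · rw [if_pos hle, one_mul]
            by_cases hβJ : γ0 - δf x ∈ J k0
            · by_cases hhd : k0 = kf x ∧ γ0 - δf x = αf x
              · exfalso
                have hkk : k0 = kf x := hhd.1
                have hγ0eq : γ0 = αf x + δf x := by
                  rw [← hhd.2]
                  exact (tsub_add_cancel_of_le hle).symm
                have huniq : pDec (P k0) γ0 = (αf x, δf x) :=
                  pDec_eq (hQS k0).2 (by rw [hkk]; exact hαx) hmx hγ0eq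
                have hα_eq : αf x = αf x0 := congrArg Prod.fst (huniq.symm.trans hpd0)
                have hδ_eq : δf x = δf x0 := congrArg Prod.snd (huniq.symm.trans hpd0)
                apply hxx
                rw [hxe, hx0e, hα_eq, hδ_eq, ← hkk]
              · exact coeff_g_ne hQS hG hαx hβJ hhd
            · exfalso
              have hγ0eq2 : γ0 = δf x + (γ0 - δf x) :=
                ((tsub_add_cancel_of_le hle).symm).trans (add_comm (γ0 - δf x) (δf x))
              have hkey : lexLt (pDec (P k0) γ0).2 (δf x) := by
                have hk := keyD (hQS k0).1 (hQS k0).2 hβJ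
                  (by rw [← hγ0eq2]; exact hγ0J)
                rwa [← hγ0eq2] at hk
              rw [hpd0] at hkey
              exact absurd (lexLt_iff.mp hkey) (not_lt.mpr (hmax x hx))
          · rw [if_neg hle]
        rw [h0, mul_zero]
    have : (0 : A) = c x0 := by
      rw [← hvc, hcoeffsum, Finset.sum_congr rfl hterm, Finset.sum_ite_eq' c.support x0 c,
        if_pos hx0]
    exact (Finsupp.mem_support_iff.mp hx0) this.symm

end AuxIndep

section AuxTr

set_option linter.unusedSectionVars false

variable {n : ℕ} {κ : Type*} [Fintype κ] [DecidableEq κ] {A : Type*} [CommRing A]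

/-- Homogeneous component of a product with a homogeneous factor. -/
lemma hcomp_mul {q r : MvPolynomial (Fin (n+1)) A} {u : ℕ} (hq : q.IsHomogeneous u) (t : ℕ) :
    homogeneousComponent t (q * r) =
      if u ≤ t then q * homogeneousComponent (t - u) r else 0 := by
  ext γ
  rw [coeff_homogeneousComponent]
  by_cases hut : u ≤ t
  · rw [if_pos hut]
    by_cases hγ : Finsupp.degree γ = t
    · rw [if_pos hγ, MvPolynomial.coeff_mul, MvPolynomial.coeff_mul]
      refine Finset.sum_congr rfl fun x hx => ?_
      have hxsum : x.1 + x.2 = γ := Finset.HasAntidiagonal.mem_antidiagonal.mp hx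
      rw [coeff_homogeneousComponent]
      by_cases h1 : coeff x.1 q = 0
      · rw [h1, zero_mul, zero_mul]
      · have hdeg1 : Finsupp.degree x.1 = u := by
          by_contra hne
          exact h1 (hq.coeff_eq_zero hne)
        have hdeg2 : Finsupp.degree x.2 = t - u := by
          have : degE x.1 + degE x.2 = degE γ := by rw [← degE_add, hxsum]
          rw [degE_eq_degree, degE_eq_degree, degE_eq_degree] at this
          omega
        rw [if_pos hdeg2]
    · rw [if_neg hγ, MvPolynomial.coeff_mul]
      symm
      refine Finset.sum_eq_zero fun x hx => ?_
      have hxsum : x.1 + x.2 = γ := Finset.HasAntidiagonal.mem_antidiagonal.mp hx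
      rw [coeff_homogeneousComponent]
      by_cases h1 : coeff x.1 q = 0
      · rw [h1, zero_mul]
      · have hdeg1 : Finsupp.degree x.1 = u := by
          by_contra hne
          exact h1 (hq.coeff_eq_zero hne)
        have hd : degE x.1 + degE x.2 = degE γ := by rw [← degE_add, hxsum]
        rw [degE_eq_degree, degE_eq_degree, degE_eq_degree] at hd
        rw [if_neg (by omega), mul_zero]
  · rw [if_neg hut, MvPolynomial.coeff_zero]
    by_cases hγ : Finsupp.degree γ = t
    · rw [if_pos hγ, MvPolynomial.coeff_mul]
      refine Finset.sum_eq_zero fun x hx => ?_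
      have hxsum : x.1 + x.2 = γ := Finset.HasAntidiagonal.mem_antidiagonal.mp hx
      by_cases h1 : coeff x.1 q = 0
      · rw [h1, zero_mul]
      · have hdeg1 : Finsupp.degree x.1 = u := by
          by_contra hne
          exact h1 (hq.coeff_eq_zero hne)
        have hd : degE x.1 + degE x.2 = degE γ := by rw [← degE_add, hxsum]
        rw [degE_eq_degree, degE_eq_degree, degE_eq_degree] at hd
        omega
    · rw [if_neg hγ]

/-- Truncation to the degree-`s` homogeneous part. -/
noncomputable def Tr (d : κ → ℤ) (s : ℤ) (v : κ → MvPolynomial (Fin (n+1)) A) :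
    κ → MvPolynomial (Fin (n+1)) A :=
  fun k => if 0 ≤ s - d k then homogeneousComponent (s - d k).toNat (v k) else 0

lemma coeff_Tr (d : κ → ℤ) (s : ℤ) (v : κ → MvPolynomial (Fin (n+1)) A) (k : κ) (β : Exp n) :
    coeff β ((Tr d s v) k) = if (degE β : ℤ) + d k = s then coeff β (v k) else 0 := by
  rw [Tr]
  by_cases h : 0 ≤ s - d k
  · rw [if_pos h, coeff_homogeneousComponent, ← degE_eq_degree]
    by_cases hc : (degE β : ℤ) + d k = s
    · rw [if_pos hc, if_pos (by omega)]
    · rw [if_neg hc, if_neg (by omega)]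
  · rw [if_neg h, MvPolynomial.coeff_zero, if_neg (by omega)]

lemma Tr_add (d : κ → ℤ) (s : ℤ) (v w : κ → MvPolynomial (Fin (n+1)) A) :
    Tr d s (v + w) = Tr d s v + Tr d s w := by
  funext k
  simp only [Tr, Pi.add_apply]
  by_cases h : 0 ≤ s - d k
  · simp only [if_pos h, map_add]
  · simp only [if_neg h, add_zero]

lemma Tr_zero (d : κ → ℤ) (s : ℤ) : Tr d s (0 : κ → MvPolynomial (Fin (n+1)) A) = 0 := by
  funext k
  rw [Tr]
  by_cases h : 0 ≤ s - d k <;> simp [h]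

lemma Tr_homog (d : κ → ℤ) (s : ℤ) (v : κ → MvPolynomial (Fin (n+1)) A) :
    Tr d s v ∈ homogCompV A d s := by
  intro k β hβ
  have := MvPolynomial.mem_support_iff.mp hβ
  rw [coeff_Tr] at this
  by_cases h : (degE β : ℤ) + d k = s
  · exact h
  · rw [if_neg h] at this; exact absurd rfl this

lemma Tr_NSupp {J : κ → Set (Exp n)} {v : κ → MvPolynomial (Fin (n+1)) A}
    (hv : v ∈ NSuppM J) (d : κ → ℤ) (s : ℤ) : Tr d s v ∈ NSuppM J := by
  intro k β hβ
  have h := MvPolynomial.mem_support_iff.mp hβ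
  rw [coeff_Tr] at h
  by_cases hc : (degE β : ℤ) + d k = s
  · rw [if_pos hc] at h
    exact hv k β (MvPolynomial.mem_support_iff.mpr h)
  · rw [if_neg hc] at h; exact absurd rfl h

lemma eq_zero_of_Tr (d : κ → ℤ) {v : κ → MvPolynomial (Fin (n+1)) A}
    (h : ∀ s : ℤ, Tr d s v = 0) : v = 0 := by
  funext k
  show v k = 0
  rw [MvPolynomial.eq_zero_iff]
  intro β
  have h2 := congrFun (h ((degE β : ℤ) + d k)) k
  have h3 := congrArg (coeff β) h2
  rw [coeff_Tr, if_pos rfl] at h3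
  simpa using h3

lemma Tr_eq_of_homog {d : κ → ℤ} {t : ℤ} {v : κ → MvPolynomial (Fin (n+1)) A}
    (hv : v ∈ homogCompV A d t) (s : ℤ) :
    Tr d s v = if s = t then v else 0 := by
  funext k
  by_cases hst : s = t
  · rw [if_pos hst]
    refine MvPolynomial.ext _ _ fun β => ?_
    rw [coeff_Tr]
    by_cases hc : (degE β : ℤ) + d k = s
    · rw [if_pos hc]
    · rw [if_neg hc]
      symm
      by_contra hnz
      exact hc (by rw [hst]; exact hv k β (MvPolynomial.mem_support_iff.mpr hnz))
  · rw [if_neg hst]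
    show Tr d s v k = 0
    refine MvPolynomial.ext _ _ fun β => ?_
    rw [coeff_Tr, MvPolynomial.coeff_zero]
    by_cases hc : (degE β : ℤ) + d k = s
    · rw [if_pos hc]
      by_contra hnz
      have := hv k β (MvPolynomial.mem_support_iff.mpr hnz)
      omega
    · rw [if_neg hc]

lemma Tr_smul_homog {q : MvPolynomial (Fin (n+1)) A} {u : ℕ} (hq : q.IsHomogeneous u)
    (d : κ → ℤ) (s : ℤ) (v : κ → MvPolynomial (Fin (n+1)) A) :
    Tr d s (q • v) = q • Tr d (s - (u:ℤ)) v := by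
  funext k
  have happ : (q • v) k = q * v k := rfl
  simp only [Tr, Pi.smul_apply]
  by_cases h1 : 0 ≤ s - d k
  · rw [if_pos h1, smul_eq_mul, hcomp_mul hq]
    by_cases h2 : 0 ≤ s - (u:ℤ) - d k
    · rw [if_pos (by omega : u ≤ (s - d k).toNat), if_pos h2]
      have : (s - d k).toNat - u = (s - (u:ℤ) - d k).toNat := by omega
      rw [this]
      rfl
    · rw [if_neg (by omega : ¬ u ≤ (s - d k).toNat), if_neg h2]
      change (0 : MvPolynomial (Fin (n+1)) A) = q • (0 : MvPolynomial (Fin (n+1)) A)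
      rw [smul_zero]
  · rw [if_neg h1, if_neg (by omega : ¬ 0 ≤ s - (u:ℤ) - d k)]
    change (0 : MvPolynomial (Fin (n+1)) A) = q • (0 : MvPolynomial (Fin (n+1)) A)
    rw [smul_zero]

end AuxTr

section AuxFinal

set_option linter.unusedSectionVars false

variable {n : ℕ} {κ : Type*} [Fintype κ] [DecidableEq κ] {A : Type*} [CommRing A]
variable {d : κ → ℤ} {J : κ → Set (Exp n)} {P : κ → Finset (Exp n)}
variable {gb : Exp n → κ → (κ → MvPolynomial (Fin (n+1)) A)}

lemma Tr_mem_GmodS (hG : IsMarkedSetV d J P gb)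
    {v : κ → MvPolynomial (Fin (n+1)) A} (hv : v ∈ GmodS P gb) :
    ∀ s : ℤ, Tr d s v ∈ GmodS P gb := by
  have hv' : v ∈ Submodule.span (MvPolynomial (Fin (n+1)) A) (GSet P gb) := hv
  clear hv
  induction hv' using Submodule.span_induction with
  | mem x hx =>
    intro s
    obtain ⟨k, α, hα, rfl⟩ := hx
    rw [Tr_eq_of_homog (g_homog hG hα) s]
    split_ifs
    · exact Submodule.subset_span ⟨k, α, hα, rfl⟩
    · exact zero_mem _
  | zero => intro s; rw [Tr_zero]; exact zero_mem _
  | add x y hx hy ihx ihy => intro s; rw [Tr_add]; exact add_mem (ihx s) (ihy s)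
  | smul a x hx ih =>
    intro s
    have hax : a • x =
        ∑ u ∈ Finset.range (a.totalDegree + 1), (homogeneousComponent u a) • x := by
      rw [← Finset.sum_smul, sum_homogeneousComponent]
    rw [hax]
    have hTrsum : ∀ (t : Finset ℕ),
        Tr d s (∑ u ∈ t, (homogeneousComponent u a) • x)
          = ∑ u ∈ t, Tr d s ((homogeneousComponent u a) • x) := by
      intro t
      induction t using Finset.induction with
      | empty => simp [Tr_zero]
      | insert _ _ hnotmem ih2 =>
        rw [Finset.sum_insert hnotmem, Tr_add, ih2, Finset.sum_insert hnotmem]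
    rw [hTrsum]
    refine Submodule.sum_mem _ fun u _ => ?_
    rw [Tr_smul_homog (homogeneousComponent_isHomogeneous u a) d s x]
    exact Submodule.smul_mem _ _ (ih (s - (u:ℤ)))

end AuxFinal
/-- Theorem `markedSetChar` (v) ⇔ (vi) ⇔ (vii): `G` is a marked basis iff
`⟨G⟩_s = ⟨G^(s)⟩^A` for all `s`, iff `N(U,⟨G⟩) = 0`. -/
theorem statement8 {n : ℕ} {κ : Type*} [Fintype κ] [DecidableEq κ] (hm : Nonempty κ)
    {A : Type*} [CommRing A] [IsNoetherianRing A]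
    (d : κ → ℤ) (J : κ → Set (Exp n)) (P : κ → Finset (Exp n))
    (hQS : ∀ k, IsMonomialIdeal (J k) ∧ IsPommaretBasis (P k) (J k))
    (gb : Exp n → κ → (κ → MvPolynomial (Fin (n+1)) A))
    (hG : IsMarkedSetV d J P gb) :
    (MarkedBasisProp d J P gb ↔
      ∀ s : ℤ, GmodDeg d P gb s = Submodule.span A (GSdeg d P gb s)) ∧
    ((∀ s : ℤ, GmodDeg d P gb s = Submodule.span A (GSdeg d P gb s)) ↔
      (GmodS P gb).restrictScalars A ⊓ Submodule.span A (NUTerms A J) = ⊥) := by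
  have hspanG : ∀ s : ℤ, Submodule.span A (GSdeg d P gb s) ≤ (GmodS P gb).restrictScalars A := by
    intro s
    rw [Submodule.span_le]
    intro w hw
    exact GSdeg_subset_GmodS hw
  constructor
  · -- (i) ↔ (ii)
    constructor
    · intro hi s
      apply le_antisymm
      · intro f hf
        obtain ⟨hfS, hfh⟩ := Submodule.mem_inf.mp hf
        obtain ⟨g, hg, h, hh, hgh⟩ := Submodule.mem_sup.mp (C1 hQS hG s hfh)
        have hgG : g ∈ GmodDeg d P gb s := span_GSdeg_le_GmodDeg hG s hg
        have hhmem : h ∈ GmodDeg d P gb s := by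
          have he : h = f - g := by rw [← hgh]; ring
          rw [he]; exact sub_mem hf hgG
        have hmem2 : h ∈ GmodDeg d P gb s ⊓ Submodule.span A (NUTermsDeg A d J s) :=
          Submodule.mem_inf.mpr ⟨hhmem, hh⟩
        rw [(hi s).2] at hmem2
        have h0 : h = 0 := Submodule.mem_bot A |>.mp hmem2
        rw [← hgh, h0, add_zero]
        exact hg
      · exact span_GSdeg_le_GmodDeg hG s
    · intro hii s
      constructor
      · apply le_antisymm
        · intro f hf
          obtain ⟨g, hg, h, hh, hgh⟩ := Submodule.mem_sup.mp (C1 hQS hG s hf)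
          exact Submodule.mem_sup.mpr ⟨g, span_GSdeg_le_GmodDeg hG s hg, h, hh, hgh⟩
        · exact sup_le inf_le_right (span_NUTermsDeg_le_homog d J s)
      · rw [eq_bot_iff]
        intro v hv
        obtain ⟨hv1, hv2⟩ := Submodule.mem_inf.mp hv
        have h1 : v ∈ Submodule.span A (GSdeg d P gb s) := by rw [← hii s]; exact hv1
        have h2 : v ∈ NSuppM J := span_NUTermsDeg_le_NSuppM d J s hv2
        rw [Submodule.mem_bot]
        exact L4 hm hQS hG s h1 h2
  · -- (ii) ↔ (iii)
    constructor
    · intro hii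
      rw [eq_bot_iff]
      intro v hv
      obtain ⟨hv1, hv2⟩ := Submodule.mem_inf.mp hv
      have hvG : v ∈ GmodS P gb := hv1
      have hvN : v ∈ NSuppM J := span_NUTerms_le_NSuppM J hv2
      rw [Submodule.mem_bot]
      apply eq_zero_of_Tr d
      intro s
      have hTrG : Tr d s v ∈ GmodDeg d P gb s :=
        Submodule.mem_inf.mpr ⟨Tr_mem_GmodS hG hvG s, Tr_homog d s v⟩
      rw [hii s] at hTrG
      exact L4 hm hQS hG s hTrG (Tr_NSupp hvN d s)
    · intro hiii s
      apply le_antisymm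
      · intro f hf
        obtain ⟨hfS, hfh⟩ := Submodule.mem_inf.mp hf
        obtain ⟨g, hg, h, hh, hgh⟩ := Submodule.mem_sup.mp (C1 hQS hG s hfh)
        have hhS : h ∈ (GmodS P gb).restrictScalars A := by
          have he : h = f - g := by rw [← hgh]; ring
          rw [he]
          exact sub_mem hfS (hspanG s hg)
        have hhN : h ∈ Submodule.span A (NUTerms A J) := span_NUTermsDeg_le_NUTerms d J s hh
        have hmem2 : h ∈ (GmodS P gb).restrictScalars A ⊓ Submodule.span A (NUTerms A J) :=
          Submodule.mem_inf.mpr ⟨hhS, hhN⟩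
        rw [hiii] at hmem2
        have h0 : h = 0 := Submodule.mem_bot A |>.mp hmem2
        rw [← hgh, h0, add_zero]
        exact hg
      · exact span_GSdeg_le_GmodDeg hG s

end MB
end

section
/- Let U ⊆ S^m_d be a quasi-stable monomial module, let r(U) be the maximal degree of an element of its Pommaret basis P(U), and let G be a P(U)-marked set. Then G is a P(U)-marked basis if and only if N(U,⟨G⟩)_s = {0} for every degree s ≤ r(U) + 1, which in turn holds if and only if ⟨G⟩_s = ⟨G^{(s)}⟩^A for every s ≤ r(U) + 1. -/
open MvPolynomial

namespace MB

variable {n : ℕ}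

set_option linter.unusedSectionVars false
namespace Aux

/-- `e i` = the exponent of `x_i`. -/
noncomputable def e (i : Fin (n+1)) : Exp n := Finsupp.single i 1

lemma degE_eq_sum_univ (δ : Exp n) : degE δ = ∑ i : Fin (n+1), δ i := by
  classical
  rw [degE, Finsupp.sum]
  exact Finset.sum_subset (Finset.subset_univ _) (by
    intro x _ hx
    simpa using (Finsupp.notMem_support_iff.mp hx))

lemma degE_add (a b : Exp n) : degE (a+b) = degE a + degE b := by
  simp [degE_eq_sum_univ, Finsupp.add_apply, Finset.sum_add_distrib]

lemma degE_e (i : Fin (n+1)) : degE (e i) = 1 := by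
  classical
  simp [degE_eq_sum_univ, e, Finsupp.single_apply]

lemma degE_eq_degree (δ : Exp n) : degE δ = Finsupp.degree δ := rfl

lemma lex_total (η δ : Exp n) : η = δ ∨ lexLt η δ ∨ lexLt δ η := by
  classical
  by_cases h : η = δ
  · exact Or.inl h
  · right
    have hne : (Finset.univ.filter (fun i => η i ≠ δ i)).Nonempty := by
      by_contra hc
      apply h
      ext i
      by_contra hi
      exact hc ⟨i, by simp [hi]⟩
    set D := Finset.univ.filter (fun i => η i ≠ δ i)
    obtain ⟨i, hiD, hmax⟩ := Finset.exists_max_image D id hne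
    have hiD' : η i ≠ δ i := by simpa [D] using hiD
    have hagree : ∀ j, i < j → η j = δ j := by
      intro j hj
      by_contra hc
      have := hmax j (by simp [D, hc])
      simp at this
      omega
    rcases lt_or_gt_of_ne hiD' with h1 | h1
    · exact Or.inl ⟨i, h1, hagree⟩
    · exact Or.inr ⟨i, h1, fun j hj => (hagree j hj).symm⟩

lemma lexLt_irrefl (δ : Exp n) : ¬ lexLt δ δ := by
  rintro ⟨i, hi, -⟩; exact lt_irrefl _ hi

lemma lexLt_trans {a b c : Exp n} (h1 : lexLt a b) (h2 : lexLt b c) : lexLt a c := by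
  obtain ⟨i, hi, ha⟩ := h1
  obtain ⟨i', hi', hb⟩ := h2
  rcases lt_trichotomy i i' with h | h | h
  · exact ⟨i', by rw [ha i' h]; exact hi', fun j hj => (ha j (h.trans hj)).trans (hb j hj)⟩
  · subst h
    exact ⟨i, lt_trans hi hi', fun j hj => (ha j hj).trans (hb j hj)⟩
  · exact ⟨i, by rw [← hb i h]; exact hi, fun j hj => (ha j hj).trans (hb j (h.trans hj))⟩

lemma lexLt_ne {a b : Exp n} (h : lexLt a b) : a ≠ b := by
  rintro rfl; exact lexLt_irrefl _ h

/-- `δ <lex e i` iff `δ` vanishes at all indices `≥ i`. -/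
lemma lexLt_e_iff (δ : Exp n) (i : Fin (n+1)) :
    lexLt δ (e i) ↔ ∀ j, i ≤ j → δ j = 0 := by
  classical
  constructor
  · rintro ⟨t, ht, hagree⟩
    have hti : t = i := by
      by_contra hc
      have : e i t = 0 := by simp [e, Finsupp.single_apply, Ne.symm hc]
      omega
    rw [hti] at ht hagree
    intro j hj
    rcases eq_or_lt_of_le hj with h' | hj'
    · have h1 : e i i = 1 := by simp [e]
      rw [← h']
      omega
    · have := hagree j hj'
      have h2 : e i j = 0 := by simp [e, Finsupp.single_apply]; omega
      omega
  · intro hv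
    refine ⟨i, ?_, fun j hj => ?_⟩
    · have : e i i = 1 := by simp [e]
      have := hv i le_rfl
      omega
    · have h2 : e i j = 0 := by simp [e, Finsupp.single_apply]; omega
      rw [hv j hj.le, h2]

/-- The measure used for well-founded recursion along `lexLt` in bounded degree. -/
def mu (B : ℕ) (δ : Exp n) : ℕ := ∑ i : Fin (n+1), δ i * (B+1)^(i:ℕ)

lemma geom_aux (B : ℕ) : ∀ m : ℕ, B * (∑ t ∈ Finset.range m, (B+1)^t) + 1 = (B+1)^m := by
  intro m
  induction m with
  | zero => simp
  | succ m ih => rw [Finset.sum_range_succ, Nat.mul_add, pow_succ, ← ih]; ring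

lemma apply_le_degE (η : Exp n) (j : Fin (n+1)) : η j ≤ degE η := by
  rw [degE_eq_sum_univ]
  exact Finset.single_le_sum (f := fun t => η t) (fun t _ => Nat.zero_le _) (Finset.mem_univ j)

lemma mu_lt_mu {B : ℕ} {η δ : Exp n} (hdeg : degE η ≤ B) (h : lexLt η δ) :
    mu B η < mu B δ := by
  classical
  obtain ⟨i, hi, hagree⟩ := h
  have hsplit : Finset.univ.filter (fun j : Fin (n+1) => ¬ j < i)
      = insert i (Finset.univ.filter (fun j => i < j)) := by
    ext j
    simp [Finset.mem_filter, Finset.mem_insert]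
    constructor
    · intro hj
      rcases eq_or_lt_of_le hj with h1 | h1
      · exact Or.inl h1.symm
      · exact Or.inr h1
    · rintro (rfl | h1)
      · exact le_rfl
      · exact h1.le
  have hmu : ∀ θ : Exp n, mu B θ = (∑ j ∈ Finset.univ.filter (fun j => j < i), θ j * (B+1)^(j:ℕ))
      + (θ i * (B+1)^(i:ℕ) + ∑ j ∈ Finset.univ.filter (fun j => i < j), θ j * (B+1)^(j:ℕ)) := by
    intro θ
    rw [mu, ← Finset.sum_filter_add_sum_filter_not Finset.univ (fun j => j < i), hsplit,
      Finset.sum_insert (by simp)]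
  have hA : ∑ j ∈ Finset.univ.filter (fun j => i < j), η j * (B+1)^(j:ℕ)
      = ∑ j ∈ Finset.univ.filter (fun j => i < j), δ j * (B+1)^(j:ℕ) :=
    Finset.sum_congr rfl (fun j hj => by rw [hagree j (by simpa using hj)])
  have hlow : (∑ j ∈ Finset.univ.filter (fun j : Fin (n+1) => j < i), η j * (B+1)^(j:ℕ)) < (B+1)^(i:ℕ) := by
    have h1 : (∑ j ∈ Finset.univ.filter (fun j : Fin (n+1) => j < i), η j * (B+1)^(j:ℕ))
        ≤ ∑ j ∈ Finset.univ.filter (fun j : Fin (n+1) => j < i), B * (B+1)^(j:ℕ) := by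
      apply Finset.sum_le_sum
      intro j _
      exact Nat.mul_le_mul_right _ ((apply_le_degE η j).trans hdeg)
    have h2 : (∑ j ∈ Finset.univ.filter (fun j : Fin (n+1) => j < i), B * (B+1)^(j:ℕ))
        ≤ ∑ t ∈ Finset.range (i:ℕ), B * (B+1)^t := by
      rw [← Finset.sum_image (f := fun t : ℕ => B * (B+1) ^ t) (g := fun j : Fin (n+1) => (j : ℕ))
        (s := Finset.univ.filter (fun j : Fin (n+1) => j < i))
        (fun a _ b _ hab => Fin.val_injective hab)]
      apply Finset.sum_le_sum_of_subset
      intro t ht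
      simp only [Finset.mem_image, Finset.mem_filter] at ht
      obtain ⟨j, ⟨-, hj⟩, rfl⟩ := ht
      simpa [Finset.mem_range] using hj
    have h3 := geom_aux B (i:ℕ)
    rw [Finset.mul_sum] at h3
    omega
  have hδge : η i * (B+1)^(i:ℕ) + (B+1)^(i:ℕ) ≤ δ i * (B+1)^(i:ℕ) := by
    have : η i + 1 ≤ δ i := hi
    calc η i * (B+1)^(i:ℕ) + (B+1)^(i:ℕ) = (η i + 1) * (B+1)^(i:ℕ) := by ring
      _ ≤ δ i * (B+1)^(i:ℕ) := Nat.mul_le_mul_right _ this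
  rw [hmu η, hmu δ, hA]
  have hδlow : 0 ≤ ∑ j ∈ Finset.univ.filter (fun j : Fin (n+1) => j < i), δ j * (B+1)^(j:ℕ) := Nat.zero_le _
  omega


section Pommaret

variable {T : Set (Exp n)} {P : Finset (Exp n)}

lemma expCongr {a b : Exp n} (h : a = b) (j : Fin (n+1)) : a j = b j := by rw [h]

lemma mem_of_cone (hPB : IsPommaretBasis P T) {α δ : Exp n} (hα : α ∈ P)
    (hmul : multExp α δ) : α + δ ∈ T :=
  (hPB.1 _).mpr ⟨α, hα, δ, hmul, rfl⟩

lemma self_mem (hPB : IsPommaretBasis P T) {α : Exp n} (hα : α ∈ P) : α ∈ T := by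
  have := mem_of_cone hPB hα (δ := 0) (by intro i hi; simp at hi)
  simpa using this

lemma cone_unique (hPB : IsPommaretBasis P T) {α β δ δ' : Exp n} (hα : α ∈ P) (hβ : β ∈ P)
    (hmα : multExp α δ) (hmβ : multExp β δ') (heq : α + δ = β + δ') : α = β ∧ δ = δ' := by
  have h1 : α = β := hPB.2 (α + δ) α hα β hβ ⟨δ, hmα, rfl⟩ ⟨δ', hmβ, heq⟩
  subst h1
  exact ⟨rfl, add_left_cancel heq⟩

/-- Key lemma: if `η ∉ T` but `δ + η ∈ T` with Pommaret representation
`α'' + δ''`, then `δ'' <lex δ`. -/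
lemma key_lemma (hPB : IsPommaretBasis P T) {η δ α'' δ'' : Exp n} (hη : η ∉ T)
    (hα : α'' ∈ P) (hmul : multExp α'' δ'') (heq : δ + η = α'' + δ'') :
    lexLt δ'' δ := by
  classical
  rcases lex_total δ'' δ with h | h | h
  · -- δ'' = δ : then η = α'' ∈ T, contradiction
    exfalso
    subst h
    have h2 : δ'' + η = δ'' + α'' := by rw [heq, add_comm]
    exact hη ((add_left_cancel h2) ▸ self_mem hPB hα)
  · exact h
  · -- δ <lex δ'' : contradiction, η would be in the cone of α''
    exfalso
    obtain ⟨i, hi, hagree⟩ := h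
    have hiδ'' : i ∈ δ''.support := Finsupp.mem_support_iff.mpr (by omega)
    have hmulti : mult α'' i := hmul i hiδ''
    have hα''low : ∀ j, j < i → α'' j = 0 := by
      intro j hj
      by_contra hc
      exact absurd (hmulti j (Finsupp.mem_support_iff.mpr hc)) (not_le.mpr hj)
    have hcoord : ∀ j, δ j + η j = α'' j + δ'' j := by
      intro j
      have := expCongr heq j
      simpa using this
    have hle : ∀ j, α'' j ≤ η j := by
      intro j
      have := hcoord j
      rcases lt_trichotomy j i with hj | hj | hj
      · rw [hα''low j hj] at *; omega
      · subst hj; omega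
      · have := hagree j hj; omega
    set δ₀ : Exp n := η - α'' with hδ₀
    have hescape : η = α'' + δ₀ := by
      ext j
      simp only [Finsupp.add_apply, hδ₀, Finsupp.tsub_apply]
      have := hle j
      omega
    have hm₀ : multExp α'' δ₀ := by
      intro j hj
      have hj' : α'' j < η j := by
        have := Finsupp.mem_support_iff.mp hj
        simp only [hδ₀, Finsupp.tsub_apply] at this
        have := hle j
        omega
      have hjle : j ≤ i := by
        by_contra hc
        push_neg at hc
        have h1 := hagree j hc
        have := hcoord j
        omega
      intro t ht
      have hti : i ≤ t := by
        by_contra hc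
        push_neg at hc
        exact absurd (hα''low t hc) (Finsupp.mem_support_iff.mp ht)
      exact le_trans hjle hti
    exact hη (hescape ▸ mem_of_cone hPB hα hm₀)

/-- Prolongation lemma: the Pommaret representation of `x_i x^α`, for `α ∈ P` and `x_i`
non-multiplicative for `α`, has its `δ`-part lex-smaller than `e i`. -/
lemma prolong_lemma (hPB : IsPommaretBasis P T) {α β δs : Exp n} {i : Fin (n+1)}
    (hα : α ∈ P) (hnm : ¬ mult α i) (hβ : β ∈ P) (hmul : multExp β δs)
    (heq : e i + α = β + δs) : lexLt δs (e i) := by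
  classical
  have hcoord : ∀ j, e i j + α j = β j + δs j := by
    intro j
    have := expCongr heq j
    simpa using this
  have heii : e i i = 1 := by simp [e]
  have heioff : ∀ j, j ≠ i → e i j = 0 := by
    intro j hj
    simp [e, Finsupp.single_apply, Ne.symm hj]
  rcases lex_total δs (e i) with h | h | h
  · -- δs = e i : then α = β and e i would be multiplicative for α
    exfalso
    rw [h] at heq hmul
    have hαβ : α = β := add_right_cancel ((add_comm α (e i)).trans heq)
    subst hαβ
    exact hnm (hmul i (Finsupp.mem_support_iff.mpr (by omega)))
  · exact h
  · -- e i <lex δs : contradiction via cone disjointness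
    exfalso
    have hδi : 1 ≤ δs i := by
      by_contra hc
      push_neg at hc
      obtain ⟨t, ht, hagree⟩ := h
      have hti : t ≠ i := by
        intro hti; subst hti
        omega
      rcases lt_or_gt_of_ne hti with h1 | h1
      · -- t < i : then δs i = e i i = 1, contra hc
        have := hagree i h1
        omega
      · -- t > i : t ∈ supp δs, mult β t forces β i = 0
        have := heioff t hti
        have htsupp : t ∈ δs.support := Finsupp.mem_support_iff.mpr (by omega)
        have hmt : mult β t := hmul t htsupp
        have hβi : β i = 0 := by
          by_contra hc2
          exact absurd (hmt i (Finsupp.mem_support_iff.mpr hc2)) (not_le.mpr h1)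
        have := hcoord i
        omega
    set δ₀ : Exp n := δs - e i with hδ₀
    have hsplit : δs = δ₀ + e i := by
      ext j
      simp only [Finsupp.add_apply, hδ₀, Finsupp.tsub_apply]
      by_cases hj : j = i
      · subst hj
        omega
      · have := heioff j hj
        omega
    have hαcone : α = β + δ₀ := by
      have h2 : e i + α = e i + (β + δ₀) := by
        rw [heq, hsplit]
        abel
      exact add_left_cancel h2
    have hm₀ : multExp β δ₀ := by
      intro j hj
      apply hmul
      have := Finsupp.mem_support_iff.mp hj
      apply Finsupp.mem_support_iff.mpr
      simp only [hδ₀, Finsupp.tsub_apply] at this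
      omega
    have hαα : α = β := by
      apply hPB.2 α α hα β hβ
      · exact ⟨0, by intro t ht; simp at ht, by simp⟩
      · exact ⟨δ₀, hm₀, hαcone⟩
    subst hαα
    have hδ0 : δ₀ = 0 := by
      have h2 : α + 0 = α + δ₀ := by simpa using hαcone
      exact (add_left_cancel h2).symm
    rw [hδ0] at hsplit
    simp at hsplit
    subst hsplit
    exact lexLt_irrefl _ h

end Pommaret

section ModuleAux

variable {A : Type*} [CommRing A] {κ : Type*} [Fintype κ] [DecidableEq κ]

local notation "M" => MvPolynomial (Fin (n+1)) A
local notation "V" => κ → MvPolynomial (Fin (n+1)) A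

lemma termV_apply (α : Exp n) (k l : κ) :
    MB.termV A α k l = if l = k then monomial α (1:A) else 0 := by
  rw [MB.termV, Pi.single_apply]

/-- The `A`-linear functional reading off the coefficient of `x^β e_l`. -/
noncomputable def cf (A : Type*) [CommRing A] {κ : Type*} [Fintype κ] [DecidableEq κ]
    (l : κ) (β : Exp n) : (κ → MvPolynomial (Fin (n+1)) A) →ₗ[A] A where
  toFun f := MvPolynomial.coeff β (f l)
  map_add' f g := by simp [MvPolynomial.coeff_add]
  map_smul' a f := by simp [MvPolynomial.coeff_smul]

lemma cf_termV (l : κ) (β : Exp n) (k : κ) (α : Exp n) :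
    cf A l β (MB.termV A α k) = if l = k ∧ β = α then 1 else 0 := by
  rw [cf]
  simp only [LinearMap.coe_mk, AddHom.coe_mk, termV_apply]
  by_cases h : l = k
  · simp [h, MvPolynomial.coeff_monomial]
    by_cases h2 : β = α
    · simp [h2]
    · rw [if_neg h2, if_neg (fun h3 => h2 h3.symm)]
  · simp [h]

/-- Scalar multiplication by `monomial δ 1`, as an `A`-linear map on the free module. -/
noncomputable def monSmul (A : Type*) [CommRing A] {κ : Type*} [Fintype κ] [DecidableEq κ]
    (δ : Exp n) : (κ → MvPolynomial (Fin (n+1)) A) →ₗ[A] (κ → MvPolynomial (Fin (n+1)) A) where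
  toFun f := (monomial δ (1:A)) • f
  map_add' f g := smul_add _ _ _
  map_smul' a f := smul_comm _ _ _

lemma monSmul_apply (δ : Exp n) (f : V) : monSmul A δ f = (monomial δ (1:A)) • f := rfl

lemma monSmul_comp (δ γ : Exp n) (f : V) :
    (monomial δ (1:A)) • ((monomial γ (1:A)) • f) = (monomial (δ + γ) (1:A)) • f := by
  rw [smul_smul, monomial_mul, one_mul]

lemma monSmul_termV (δ α : Exp n) (k : κ) :
    (monomial δ (1:A)) • MB.termV A α k = MB.termV A (δ + α) k := by
  funext l
  rw [Pi.smul_apply, termV_apply, termV_apply, smul_eq_mul]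
  by_cases h : l = k <;> simp [h, monomial_mul]

/-- Expansion of a vector as an `A`-linear combination of its terms. -/
lemma expand (f : V) :
    f = ∑ l : κ, ∑ β ∈ (f l).support, MvPolynomial.coeff β (f l) • MB.termV A β l := by
  funext l'
  rw [Finset.sum_apply]
  rw [Finset.sum_eq_single l']
  · rw [Finset.sum_apply]
    conv_lhs => rw [MvPolynomial.as_sum (f l')]
    apply Finset.sum_congr rfl
    intro β _
    rw [Pi.smul_apply, termV_apply, if_pos rfl, MvPolynomial.smul_monomial, smul_eq_mul, mul_one]
  · intro l _ hl
    rw [Finset.sum_apply]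
    apply Finset.sum_eq_zero
    intro β _
    rw [Pi.smul_apply, termV_apply, if_neg (Ne.symm hl), smul_zero]
  · intro h
    exact absurd (Finset.mem_univ l') h

/-- Workhorse: to show membership of `f` in an `A`-submodule it suffices to handle
each term of `f`. -/
lemma mem_span_of_coeffs {W : Submodule A (κ → MvPolynomial (Fin (n+1)) A)} (f : V)
    (h : ∀ l β, β ∈ (f l).support → MB.termV A β l ∈ W) : f ∈ W := by
  rw [expand f]
  apply Submodule.sum_mem
  intro l _
  apply Submodule.sum_mem
  intro β hβ
  exact Submodule.smul_mem _ _ (h l β hβ)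

end ModuleAux

section HomogAux

variable {A : Type*} [CommRing A] {κ : Type*} [Fintype κ] [DecidableEq κ]
variable {d : κ → ℤ} {J : κ → Set (Exp n)} {P : κ → Finset (Exp n)}
variable {gb : Exp n → κ → (κ → MvPolynomial (Fin (n+1)) A)}

local notation "V" => κ → MvPolynomial (Fin (n+1)) A

lemma mem_homogCompV {f : V} {s : ℤ} : f ∈ homogCompV A d s ↔ IsHomogV d f s := Iff.rfl

lemma termV_homog {α : Exp n} {k : κ} {s : ℤ} (h : (degE α : ℤ) + d k = s) :
    MB.termV A α k ∈ homogCompV A d s := by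
  intro l β hβ
  rw [termV_apply] at hβ
  by_cases hl : l = k
  · rw [if_pos hl] at hβ
    classical
    rw [MvPolynomial.support_monomial] at hβ
    by_cases h1 : (1:A) = 0
    · rw [if_pos h1] at hβ; simp at hβ
    · rw [if_neg h1] at hβ
      simp only [Finset.mem_singleton] at hβ
      subst hβ; rw [hl]; exact h
  · rw [if_neg hl] at hβ; simp at hβ

lemma hg_homog (hG : IsMarkedSetV d J P gb) {k : κ} {α : Exp n} (hα : α ∈ P k) :
    gb α k ∈ homogCompV A d ((degE α : ℤ) + d k) := by
  have : gb α k = (gb α k - MB.termV A α k) + MB.termV A α k := by ring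
  rw [this]
  apply Submodule.add_mem
  · intro l β hβ
    exact (hG k α hα l β hβ).2
  · exact termV_homog rfl

lemma support_monomial_smul {p : MvPolynomial (Fin (n+1)) A} {δ β' : Exp n}
    (h : β' ∈ (monomial δ (1:A) * p).support) : ∃ β ∈ p.support, β' = δ + β := by
  classical
  have := MvPolynomial.support_mul (monomial δ (1:A)) p h
  rw [Finset.mem_add] at this
  obtain ⟨u, hu, v, hv, huv⟩ := this
  rw [MvPolynomial.support_monomial] at hu
  by_cases h1 : (1:A) = 0
  · rw [if_pos h1] at hu; simp at hu
  · rw [if_neg h1] at hu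
    simp only [Finset.mem_singleton] at hu
    exact ⟨v, hv, by rw [← huv, hu]⟩

lemma monSmul_homog {f : V} {t : ℤ} (hf : f ∈ homogCompV A d t) (δ : Exp n) :
    (monomial δ (1:A)) • f ∈ homogCompV A d ((degE δ : ℤ) + t) := by
  intro l β' hβ'
  rw [Pi.smul_apply, smul_eq_mul] at hβ'
  obtain ⟨β, hβ, rfl⟩ := support_monomial_smul hβ'
  have := hf l β hβ
  rw [degE_add]
  push_cast
  omega

lemma spanNdeg_le_homog {s : ℤ} :
    Submodule.span A (NUTermsDeg A d J s) ≤ homogCompV A d s := by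
  rw [Submodule.span_le]
  rintro v ⟨k, α, -, hdeg, rfl⟩
  exact termV_homog hdeg

lemma spanNdeg_le_spanNUT {s : ℤ} :
    Submodule.span A (NUTermsDeg A d J s) ≤ Submodule.span A (NUTerms A J) := by
  apply Submodule.span_mono
  rintro v ⟨k, α, hk, -, rfl⟩
  exact ⟨k, α, hk, rfl⟩

lemma mem_spanNUT_coeff {x : V} (hx : x ∈ Submodule.span A (NUTerms A J))
    {l : κ} {β : Exp n} (hβ : β ∈ J l) : MvPolynomial.coeff β (x l) = 0 := by
  have hle : Submodule.span A (NUTerms A J) ≤ LinearMap.ker (cf A l β) := by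
    rw [Submodule.span_le]
    rintro v ⟨k, α, hα, rfl⟩
    rw [SetLike.mem_coe, LinearMap.mem_ker, cf_termV]
    rw [if_neg]
    rintro ⟨rfl, rfl⟩
    exact hα hβ
  exact hle hx

lemma mem_spanNdeg_of {s : ℤ} {f : V} (hf : f ∈ homogCompV A d s)
    (h : ∀ l β, β ∈ J l → MvPolynomial.coeff β (f l) = 0) :
    f ∈ Submodule.span A (NUTermsDeg A d J s) := by
  apply mem_span_of_coeffs
  intro l β hβ
  have hcoeff := MvPolynomial.mem_support_iff.mp hβ
  have hβJ : β ∉ J l := fun hJ => hcoeff (h l β hJ)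
  exact Submodule.subset_span ⟨l, β, hβJ, hf l β hβ, rfl⟩

/-- The set `G^(s)` restricted to multiplicative multipliers `δ` satisfying `Q`. -/
def GSQ (d : κ → ℤ) (P : κ → Finset (Exp n))
    (gb : Exp n → κ → (κ → MvPolynomial (Fin (n+1)) A)) (Q : Exp n → Prop) (s : ℤ) :
    Set (κ → MvPolynomial (Fin (n+1)) A) :=
  {v | ∃ k, ∃ α ∈ P k, ∃ δ : Exp n, multExp α δ ∧ Q δ ∧
    (degE δ : ℤ) + (degE α : ℤ) + d k = s ∧ v = (monomial δ (1:A)) • gb α k}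

lemma GSQ_mono {Q Q' : Exp n → Prop} (h : ∀ δ, Q δ → Q' δ) (s : ℤ) :
    GSQ d P gb Q s ⊆ GSQ (A := A) d P gb Q' s := by
  rintro v ⟨k, α, hα, δ, h1, h2, h3, h4⟩
  exact ⟨k, α, hα, δ, h1, h δ h2, h3, h4⟩

lemma GSdeg_eq_GSQ (s : ℤ) : GSdeg d P gb s = GSQ (A := A) d P gb (fun _ => True) s := by
  ext v
  constructor
  · rintro ⟨k, α, hα, δ, h1, h3, h4⟩
    exact ⟨k, α, hα, δ, h1, trivial, h3, h4⟩
  · rintro ⟨k, α, hα, δ, h1, -, h3, h4⟩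
    exact ⟨k, α, hα, δ, h1, h3, h4⟩

lemma GSQ_mem_GmodS {Q : Exp n → Prop} {s : ℤ} {v : V} (hv : v ∈ GSQ d P gb Q s) :
    v ∈ (GmodS P gb).restrictScalars A := by
  obtain ⟨k, α, hα, δ, -, -, -, rfl⟩ := hv
  rw [Submodule.restrictScalars_mem]
  exact Submodule.smul_mem _ _ (Submodule.subset_span ⟨k, α, hα, rfl⟩)

lemma spanGSQ_le_GmodDeg (hG : IsMarkedSetV d J P gb) {Q : Exp n → Prop} {s : ℤ} :
    Submodule.span A (GSQ d P gb Q s) ≤ GmodDeg d P gb s := by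
  rw [Submodule.span_le]
  intro v hv
  rw [SetLike.mem_coe, GmodDeg, Submodule.mem_inf]
  refine ⟨GSQ_mem_GmodS hv, ?_⟩
  obtain ⟨k, α, hα, δ, -, -, hdeg, rfl⟩ := hv
  have := monSmul_homog (hg_homog hG hα) δ
  rw [show (degE δ : ℤ) + ((degE α : ℤ) + d k) = (degE δ : ℤ) + (degE α : ℤ) + d k by ring] at this
  rw [← hdeg]
  exact this

/-- The degree bound used for the termination measure. -/
def Bb (d : κ → ℤ) (s : ℤ) : ℕ := Finset.univ.sup (fun l : κ => (s - d l).toNat)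

lemma Bb_spec {s : ℤ} {β : Exp n} {l : κ} (h : (degE β : ℤ) + d l = s) :
    degE β ≤ Bb (κ := κ) d s := by
  have h1 : ((degE β : ℤ)).toNat = degE β := Int.toNat_natCast _
  have h2 : (s - d l) = (degE β : ℤ) := by omega
  calc degE β = (s - d l).toNat := by rw [h2, h1]
    _ ≤ Bb d s := Finset.le_sup (f := fun l : κ => (s - d l).toNat) (Finset.mem_univ l)

end HomogAux

section Reduction

variable {A : Type*} [CommRing A] {κ : Type*} [Fintype κ] [DecidableEq κ]
variable {d : κ → ℤ} {J : κ → Set (Exp n)} {P : κ → Finset (Exp n)}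
variable {gb : Exp n → κ → (κ → MvPolynomial (Fin (n+1)) A)}

/-- Reduction: the term `x^{α+δ} e_k` (with `δ` multiplicative for `α ∈ P(U)`) is an
`A`-linear combination of multiplicative multiples `x^{δ'} f_{α'}` with `δ' ≤lex δ` and
terms of `N(U)`, all in the same degree. -/
lemma redLemma (hQS : ∀ k, IsMonomialIdeal (J k) ∧ IsPommaretBasis (P k) (J k))
    (hG : IsMarkedSetV d J P gb) (s : ℤ) :
    ∀ (N : ℕ) (δ : Exp n) (k : κ) (α : Exp n), mu (Bb (κ := κ) d s) δ ≤ N → α ∈ P k →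
    multExp α δ → (degE (α + δ) : ℤ) + d k = s →
    MB.termV A (α + δ) k ∈ Submodule.span A (GSQ d P gb (fun δ' => δ' = δ ∨ lexLt δ' δ) s)
      ⊔ Submodule.span A (NUTermsDeg A d J s) := by
  intro N
  induction N using Nat.strong_induction_on with
  | _ N ih =>
  intro δ k α hmu hα hmul hdeg
  rw [add_comm α δ, ← monSmul_termV]
  rw [show (monomial δ (1:A)) • MB.termV A α k
      = (monomial δ (1:A)) • gb α k - (monomial δ (1:A)) • (gb α k - MB.termV A α k) by
    rw [smul_sub]; abel]
  apply Submodule.sub_mem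
  · apply Submodule.mem_sup_left
    apply Submodule.subset_span
    refine ⟨k, α, hα, δ, hmul, Or.inl rfl, ?_, rfl⟩
    rw [degE_add] at hdeg; push_cast at hdeg ⊢; omega
  · apply mem_span_of_coeffs
    intro l β' hβ'
    rw [Pi.smul_apply, smul_eq_mul] at hβ'
    obtain ⟨β, hβ, rfl⟩ := support_monomial_smul hβ'
    obtain ⟨hβJ, hβdeg⟩ := hG k α hα l β hβ
    have hdegβ' : (degE (δ + β) : ℤ) + d l = s := by
      rw [degE_add] at hdeg ⊢; push_cast at *; omega
    by_cases hJ : δ + β ∈ J l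
    · -- the term is again in `U`: reduce further along its Pommaret representation
      obtain ⟨α'', hα'', δ'', hmul'', heq''⟩ := ((hQS l).2.1 _).mp hJ
      have hlex : lexLt δ'' δ := key_lemma (hQS l).2 hβJ hα'' hmul'' heq''
      have hB'' : degE δ'' ≤ Bb (κ := κ) d s := by
        have h1 : degE (α'' + δ'') ≤ Bb (κ := κ) d s :=
          Bb_spec (by rw [← heq'']; exact hdegβ')
        rw [degE_add] at h1; omega
      have hmu'' : mu (Bb (κ := κ) d s) δ'' < N := lt_of_lt_of_le (mu_lt_mu hB'' hlex) hmu
      have hrec := ih (mu (Bb (κ := κ) d s) δ'') hmu'' δ'' l α'' le_rfl hα'' hmul''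
        (by rw [← heq'']; exact hdegβ')
      have hmon : Submodule.span A (GSQ d P gb (fun δ' => δ' = δ'' ∨ lexLt δ' δ'') s)
          ⊔ Submodule.span A (NUTermsDeg A d J s)
          ≤ Submodule.span A (GSQ d P gb (fun δ' => δ' = δ ∨ lexLt δ' δ) s)
          ⊔ Submodule.span A (NUTermsDeg A d J s) := by
        apply sup_le_sup_right
        apply Submodule.span_mono
        apply GSQ_mono
        rintro γ (rfl | h2)
        · exact Or.inr hlex
        · exact Or.inr (lexLt_trans h2 hlex)
      rw [heq'']
      exact hmon hrec
    · -- the term is in `N(U)`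
      apply Submodule.mem_sup_right
      exact Submodule.subset_span ⟨l, δ + β, hJ, hdegβ', rfl⟩

end Reduction

section RedCor

variable {A : Type*} [CommRing A] {κ : Type*} [Fintype κ] [DecidableEq κ]
variable {d : κ → ℤ} {J : κ → Set (Exp n)} {P : κ → Finset (Exp n)}
variable {gb : Exp n → κ → (κ → MvPolynomial (Fin (n+1)) A)}

lemma spanGSQ_le_spanGSdeg {Q : Exp n → Prop} {s : ℤ} :
    Submodule.span A (GSQ d P gb Q s) ≤ Submodule.span A (GSdeg d P gb s) := by
  apply Submodule.span_mono
  rw [GSdeg_eq_GSQ]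
  exact GSQ_mono (fun _ _ => trivial) s

/-- Every homogeneous element reduces: `(S^m_d)_s = ⟨G^(s)⟩^A + ⟨N(U)_s⟩^A`. -/
lemma homog_le_red (hQS : ∀ k, IsMonomialIdeal (J k) ∧ IsPommaretBasis (P k) (J k))
    (hG : IsMarkedSetV d J P gb) (s : ℤ) :
    homogCompV A d s ≤ Submodule.span A (GSdeg d P gb s)
      ⊔ Submodule.span A (NUTermsDeg A d J s) := by
  intro f hf
  apply mem_span_of_coeffs
  intro l β hβ
  have hdeg : (degE β : ℤ) + d l = s := hf l β hβ
  by_cases hJ : β ∈ J l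
  · obtain ⟨α'', hα'', δ'', hmul'', heq''⟩ := ((hQS l).2.1 _).mp hJ
    have := redLemma hQS hG s (mu (Bb (κ := κ) d s) δ'') δ'' l α'' le_rfl hα'' hmul''
      (by rw [← heq'']; exact hdeg)
    rw [heq'']
    exact (sup_le_sup_right (spanGSQ_le_spanGSdeg (d := d) (P := P) (gb := gb)) (Submodule.span A (NUTermsDeg A d J s))) this
  · exact Submodule.mem_sup_right (Submodule.subset_span ⟨l, β, hJ, hdeg, rfl⟩)

/-- Controlled representation of a non-multiplicative prolongation `x_i f_α`:
all multipliers `δ'` appearing are `<lex e i` (in particular they only involve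
variables `< x_i`). -/
lemma Xi_rep (hQS : ∀ k, IsMonomialIdeal (J k) ∧ IsPommaretBasis (P k) (J k))
    (hG : IsMarkedSetV d J P gb) {k : κ} {α : Exp n} {i : Fin (n+1)}
    (hα : α ∈ P k) (hnm : ¬ mult α i) {t : ℤ} (ht : (degE α : ℤ) + d k + 1 = t) :
    (monomial (e i) (1:A)) • gb α k ∈
      Submodule.span A (GSQ d P gb (fun δ' => lexLt δ' (e i)) t)
        ⊔ Submodule.span A (NUTermsDeg A d J t) := by
  rw [show (monomial (e i) (1:A)) • gb α k
      = (monomial (e i) (1:A)) • MB.termV A α k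
        + (monomial (e i) (1:A)) • (gb α k - MB.termV A α k) by rw [smul_sub]; abel]
  apply Submodule.add_mem
  · -- head term x_i x^α : in U since U is a monomial module
    rw [monSmul_termV]
    have hJk : e i + α ∈ J k := by
      rw [add_comm]
      exact (hQS k).1 α (self_mem (hQS k).2 hα) (e i)
    obtain ⟨α'', hα'', δ'', hmul'', heq''⟩ := ((hQS k).2.1 _).mp hJk
    have hlex : lexLt δ'' (e i) := prolong_lemma (hQS k).2 hα hnm hα'' hmul'' heq''
    have hdeg'' : (degE (α'' + δ'') : ℤ) + d k = t := by
      rw [← heq'', degE_add, degE_e]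
      push_cast
      omega
    have := redLemma hQS hG t (mu (Bb (κ := κ) d t) δ'') δ'' k α'' le_rfl hα'' hmul'' hdeg''
    have hmon : Submodule.span A (GSQ d P gb (fun δ' => δ' = δ'' ∨ lexLt δ' δ'') t)
        ⊔ Submodule.span A (NUTermsDeg A d J t)
        ≤ Submodule.span A (GSQ d P gb (fun δ' => lexLt δ' (e i)) t)
        ⊔ Submodule.span A (NUTermsDeg A d J t) := by
      apply sup_le_sup_right
      apply Submodule.span_mono
      apply GSQ_mono
      rintro γ (rfl | h2)
      · exact hlex
      · exact lexLt_trans h2 hlex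
    rw [heq'']
    exact hmon this
  · -- tail terms
    apply mem_span_of_coeffs
    intro l β' hβ'
    rw [Pi.smul_apply, smul_eq_mul] at hβ'
    obtain ⟨β, hβ, rfl⟩ := support_monomial_smul hβ'
    obtain ⟨hβJ, hβdeg⟩ := hG k α hα l β hβ
    have hdegβ' : (degE (e i + β) : ℤ) + d l = t := by
      rw [degE_add, degE_e]; push_cast at *; omega
    by_cases hJ : e i + β ∈ J l
    · obtain ⟨α'', hα'', δ'', hmul'', heq''⟩ := ((hQS l).2.1 _).mp hJ
      have hlex : lexLt δ'' (e i) := key_lemma (hQS l).2 hβJ hα'' hmul'' heq''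
      have := redLemma hQS hG t (mu (Bb (κ := κ) d t) δ'') δ'' l α'' le_rfl hα'' hmul''
        (by rw [← heq'']; exact hdegβ')
      have hmon : Submodule.span A (GSQ d P gb (fun δ' => δ' = δ'' ∨ lexLt δ' δ'') t)
          ⊔ Submodule.span A (NUTermsDeg A d J t)
          ≤ Submodule.span A (GSQ d P gb (fun δ' => lexLt δ' (e i)) t)
          ⊔ Submodule.span A (NUTermsDeg A d J t) := by
        apply sup_le_sup_right
        apply Submodule.span_mono
        apply GSQ_mono
        rintro γ (rfl | h2)
        · exact hlex
        · exact lexLt_trans h2 hlex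
      rw [heq'']
      exact hmon this
    · exact Submodule.mem_sup_right (Submodule.subset_span ⟨l, e i + β, hJ, hdegβ', rfl⟩)

end RedCor

section Cancel

variable {A : Type*} [CommRing A] {κ : Type*} [Fintype κ] [DecidableEq κ]
variable {d : κ → ℤ} {J : κ → Set (Exp n)} {P : κ → Finset (Exp n)}
variable {gb : Exp n → κ → (κ → MvPolynomial (Fin (n+1)) A)}

/-- Cancellation: an element of `⟨G^(s)⟩^A` all of whose coefficients on terms of `U`
vanish is zero. -/
lemma span_GS_cancel (hm : Nonempty κ)
    (hQS : ∀ k, IsMonomialIdeal (J k) ∧ IsPommaretBasis (P k) (J k))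
    (hG : IsMarkedSetV d J P gb) {s : ℤ} {h : κ → MvPolynomial (Fin (n+1)) A}
    (hmem : h ∈ Submodule.span A (GSdeg d P gb s))
    (hcoef : ∀ l β, β ∈ J l → MvPolynomial.coeff β (h l) = 0) : h = 0 := by
  classical
  rw [Submodule.mem_span_set] at hmem
  obtain ⟨c, hsup, hsum⟩ := hmem
  suffices hempty : c.support = ∅ by
    rw [← hsum, Finsupp.sum, hempty, Finset.sum_empty]
  by_contra hne
  rw [← Ne, ← Finset.nonempty_iff_ne_empty] at hne
  -- choose a Pommaret datum for each element of the support
  have hchoice : ∀ v : κ → MvPolynomial (Fin (n+1)) A, ∃ p : κ × Exp n × Exp n,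
      v ∈ c.support → p.2.1 ∈ P p.1 ∧ multExp p.2.1 p.2.2 ∧
        (degE p.2.2 : ℤ) + (degE p.2.1 : ℤ) + d p.1 = s ∧
        v = (monomial p.2.2 (1:A)) • gb p.2.1 p.1 := by
    intro v
    by_cases hv : v ∈ c.support
    · obtain ⟨k, α, hα, δ, h1, h2, h3⟩ := hsup hv
      exact ⟨⟨k, α, δ⟩, fun _ => ⟨hα, h1, h2, h3⟩⟩
    · exact ⟨⟨Classical.arbitrary κ, 0, 0⟩, fun hv' => absurd hv' hv⟩
  choose F hF using hchoice
  obtain ⟨vm, hvm, hmax⟩ := Finset.exists_max_image c.support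
    (fun v => mu (Bb (κ := κ) d s) (F v).2.2) hne
  obtain ⟨hαm, hmulm, hdegm, hvm_eq⟩ := hF vm hvm
  set km := (F vm).1
  set αm := (F vm).2.1
  set δm := (F vm).2.2
  set head : Exp n := αm + δm with hhead
  have hheadJ : head ∈ J km := mem_of_cone (hQS km).2 hαm hmulm
  have hheaddeg : (degE head : ℤ) + d km = s := by
    rw [hhead, degE_add]; push_cast; omega
  have hBm : degE δm ≤ Bb (κ := κ) d s := by
    have := Bb_spec (l := km) hheaddeg
    rw [hhead, degE_add] at this; omega
  -- the tail of any element of the support cannot contribute to `head`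
  have htail : ∀ v ∈ c.support, MvPolynomial.coeff head
      ((monomial (F v).2.2 (1:A) * (gb (F v).2.1 (F v).1 - MB.termV A (F v).2.1 (F v).1) km)) = 0 := by
    intro v hv
    obtain ⟨hαv, hmulv, hdegv, hv_eq⟩ := hF v hv
    by_contra hc
    have hsupp : head ∈ (monomial (F v).2.2 (1:A)
        * ((gb (F v).2.1 (F v).1 - MB.termV A (F v).2.1 (F v).1) km)).support :=
      MvPolynomial.mem_support_iff.mpr hc
    obtain ⟨β, hβ, hβeq⟩ := support_monomial_smul hsupp
    obtain ⟨hβJ, -⟩ := hG (F v).1 (F v).2.1 hαv km β hβ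
    have hlex : lexLt δm (F v).2.2 :=
      key_lemma (hQS km).2 hβJ hαm hmulm (by rw [← hβeq, hhead])
    have := mu_lt_mu hBm hlex
    have := hmax v hv
    omega
  -- the head coefficient of the sum is `c vm`
  have hcf : cf A km head h = c vm := by
    rw [← hsum, map_finsuppSum, Finsupp.sum]
    rw [Finset.sum_eq_single vm]
    · rw [map_smul, smul_eq_mul]
      have : cf A km head vm = 1 := by
        rw [hvm_eq]
        rw [show gb αm km = MB.termV A αm km + (gb αm km - MB.termV A αm km) by abel]
        rw [smul_add, map_add, monSmul_termV, cf_termV, if_pos ⟨rfl, by rw [hhead, add_comm]⟩]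
        have := htail vm hvm
        rw [cf]
        simp only [LinearMap.coe_mk, AddHom.coe_mk, Pi.smul_apply, smul_eq_mul]
        rw [this]
        ring
      rw [this, mul_one]
    · intro v hv hvne
      obtain ⟨hαv, hmulv, hdegv, hv_eq⟩ := hF v hv
      rw [map_smul, smul_eq_mul]
      have hcv : cf A km head v = 0 := by
        rw [hv_eq]
        rw [show gb (F v).2.1 (F v).1 = MB.termV A (F v).2.1 (F v).1
          + (gb (F v).2.1 (F v).1 - MB.termV A (F v).2.1 (F v).1) by abel]
        rw [smul_add, map_add, monSmul_termV, cf_termV]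
        have hneg : ¬(km = (F v).1 ∧ head = (F v).2.2 + (F v).2.1) := by
          rintro ⟨hk, hh⟩
          rw [← hk] at hαv
          have heq2 : αm + δm = (F v).2.1 + (F v).2.2 := by
            rw [← hhead, hh, add_comm]
          obtain ⟨hα_eq, hδ_eq⟩ := cone_unique (hQS km).2 hαm hαv hmulm hmulv heq2
          apply hvne
          rw [hv_eq, hvm_eq, ← hα_eq, ← hδ_eq, hk]
        rw [if_neg hneg]
        have htv : cf A km head ((monomial (F v).2.2 (1:A))
            • (gb (F v).2.1 (F v).1 - MB.termV A (F v).2.1 (F v).1)) = 0 := by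
          rw [cf]
          simp only [LinearMap.coe_mk, AddHom.coe_mk, Pi.smul_apply, smul_eq_mul]
          exact htail v hv
        rw [htv, add_zero]
      rw [hcv, mul_zero]
    · intro hvm'
      exact absurd hvm hvm'
  have h0 : c vm = 0 := by
    rw [← hcf]
    exact hcoef km head hheadJ
  exact (Finsupp.mem_support_iff.mp hvm) h0

end Cancel

section ProdMem

variable {A : Type*} [CommRing A] {κ : Type*} [Fintype κ] [DecidableEq κ]
variable {d : κ → ℤ} {J : κ → Set (Exp n)} {P : κ → Finset (Exp n)}
variable {gb : Exp n → κ → (κ → MvPolynomial (Fin (n+1)) A)}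

lemma sub_e_add {γ : Exp n} {i : Fin (n+1)} (hi : i ∈ γ.support) :
    (γ - e i) + e i = γ := by
  classical
  have hγi : 1 ≤ γ i := by
    have := Finsupp.mem_support_iff.mp hi; omega
  ext j
  simp only [Finsupp.add_apply, Finsupp.tsub_apply]
  by_cases hj : j = i
  · subst hj
    have : e j j = 1 := by simp [e]
    omega
  · have : e i j = 0 := by simp [e, Finsupp.single_apply, Ne.symm hj]
    omega

lemma degE_sub_e {γ : Exp n} {i : Fin (n+1)} (hi : i ∈ γ.support) :
    degE (γ - e i) + 1 = degE γ := by
  conv_rhs => rw [← sub_e_add hi]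
  rw [degE_add, degE_e]

lemma monSmul_span {γ' : Exp n} {S1 : Set (κ → MvPolynomial (Fin (n+1)) A)}
    {S2 : Submodule A (κ → MvPolynomial (Fin (n+1)) A)}
    (hgen : ∀ v ∈ S1, (monomial γ' (1:A)) • v ∈ S2) :
    ∀ u ∈ Submodule.span A S1, (monomial γ' (1:A)) • u ∈ S2 := by
  intro u hu
  have h1 : (monSmul A γ') u ∈ Submodule.map (monSmul A γ') (Submodule.span A S1) :=
    Submodule.mem_map_of_mem hu
  rw [Submodule.map_span] at h1
  rw [← monSmul_apply]
  revert h1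
  apply Submodule.span_le.mpr
  rintro x ⟨v, hv, rfl⟩
  exact hgen v hv

/-- Under the hypothesis that `N(U,⟨G⟩)` vanishes in degrees `≤ r+1`, every multiple
`x^γ f_α` is an `A`-linear combination of multiplicative multiples of the same degree. -/
lemma prodMem (hQS : ∀ k, IsMonomialIdeal (J k) ∧ IsPommaretBasis (P k) (J k))
    (hG : IsMarkedSetV d J P gb) (r : ℤ) (hub : ∀ k, ∀ α ∈ P k, (degE α : ℤ) + d k ≤ r)
    (hC1 : ∀ s : ℤ, s ≤ r + 1 → (GmodS P gb).restrictScalars A ⊓ Submodule.span A (NUTerms A J)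
          ⊓ homogCompV A d s = ⊥) (s : ℤ) :
    ∀ (N : ℕ) (γ : Exp n) (k : κ) (α : Exp n), mu (Bb (κ := κ) d s) γ ≤ N → α ∈ P k →
      (degE γ : ℤ) + (degE α : ℤ) + d k = s →
      (monomial γ (1:A)) • gb α k ∈ Submodule.span A (GSdeg d P gb s) := by
  intro N
  induction N using Nat.strong_induction_on with
  | _ N ih =>
  intro γ k α hmu hα hdeg
  by_cases hmul : multExp α γ
  · exact Submodule.subset_span ⟨k, α, hα, γ, hmul, hdeg, rfl⟩
  · rw [multExp] at hmul; push_neg at hmul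
    obtain ⟨i, hisupp, hnm⟩ := hmul
    set t : ℤ := (degE α : ℤ) + d k + 1 with htdef
    have htr : t ≤ r + 1 := by have := hub k α hα; omega
    have hXi := Xi_rep (J := J) hQS hG hα hnm (t := t) (by omega)
    obtain ⟨u, hu, w, hw, huw⟩ := Submodule.mem_sup.mp hXi
    have hu_gmod : u ∈ GmodDeg d P gb t := spanGSQ_le_GmodDeg (J := J) hG hu
    rw [GmodDeg, Submodule.mem_inf] at hu_gmod
    have hw0 : w = 0 := by
      have hbig := hC1 t htr
      have hwmem : w ∈ (GmodS P gb).restrictScalars A ⊓ Submodule.span A (NUTerms A J)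
          ⊓ homogCompV A d t := by
        refine Submodule.mem_inf.mpr ⟨Submodule.mem_inf.mpr ⟨?_, ?_⟩, ?_⟩
        · have h1 : ((monomial (e i) (1:A)) • gb α k) ∈ (GmodS P gb).restrictScalars A := by
            rw [Submodule.restrictScalars_mem]
            exact Submodule.smul_mem _ _ (Submodule.subset_span ⟨k, α, hα, rfl⟩)
          have h2 := hu_gmod.1
          have hwe : w = (monomial (e i) (1:A)) • gb α k - u := by rw [← huw]; abel
          rw [hwe]
          exact Submodule.sub_mem _ h1 h2
        · exact spanNdeg_le_spanNUT hw
        · exact spanNdeg_le_homog hw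
      rw [hbig] at hwmem
      simpa using hwmem
    have hXu : (monomial (e i) (1:A)) • gb α k = u := by rw [← huw, hw0, add_zero]
    have hsplit : (monomial γ (1:A)) • gb α k = (monomial (γ - e i) (1:A)) • u := by
      rw [← hXu, monSmul_comp, sub_e_add hisupp]
    rw [hsplit]
    apply monSmul_span _ u hu
    rintro v ⟨k', α', hα', δ', hmul', hlex', hdeg', rfl⟩
    rw [monSmul_comp]
    set γ' : Exp n := (γ - e i) + δ' with hγ'def
    have hγi : 1 ≤ γ i := by
      have := Finsupp.mem_support_iff.mp hisupp; omega
    have hδ'zero : ∀ j, i ≤ j → δ' j = 0 := (lexLt_e_iff δ' i).mp hlex'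
    have hdegγ' : (degE γ' : ℤ) + (degE α' : ℤ) + d k' = s := by
      have h1 : degE γ' = degE (γ - e i) + degE δ' := degE_add _ _
      have h2 := degE_sub_e hisupp
      rw [h1]
      push_cast
      push_cast at hdeg hdeg'
      omega
    have hlexγ' : lexLt γ' γ := by
      refine ⟨i, ?_, ?_⟩
      · have h1 : γ' i = (γ i - 1) + δ' i := by
          simp only [hγ'def, Finsupp.add_apply, Finsupp.tsub_apply]
          have : e i i = 1 := by simp [e]
          omega
        rw [h1, hδ'zero i le_rfl]
        omega
      · intro j hj
        have h1 : e i j = 0 := by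
          simp [e, Finsupp.single_apply]
          intro hij
          rw [hij] at hj
          exact absurd hj (lt_irrefl _)
        simp only [hγ'def, Finsupp.add_apply, Finsupp.tsub_apply]
        rw [hδ'zero j hj.le, h1]
        omega
    have hBγ' : degE γ' ≤ Bb (κ := κ) d s := by
      have h1 : (degE (γ' + α') : ℤ) + d k' = s := by
        rw [degE_add]; push_cast; push_cast at hdegγ'; omega
      have := Bb_spec h1
      rw [degE_add] at this
      omega
    have hmuγ' : mu (Bb (κ := κ) d s) γ' < N :=
      lt_of_lt_of_le (mu_lt_mu hBγ' hlexγ') hmu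
    exact ih (mu (Bb (κ := κ) d s) γ') hmuγ' γ' k' α' le_rfl hα' hdegγ'

end ProdMem

section Decomp

variable {A : Type*} [CommRing A] {κ : Type*} [Fintype κ] [DecidableEq κ]
variable {d : κ → ℤ} {J : κ → Set (Exp n)} {P : κ → Finset (Exp n)}
variable {gb : Exp n → κ → (κ → MvPolynomial (Fin (n+1)) A)}

/-- All monomial multiples of elements of the marked set. -/
def AllProdSet (P : κ → Finset (Exp n)) (gb : Exp n → κ → (κ → MvPolynomial (Fin (n+1)) A)) :
    Set (κ → MvPolynomial (Fin (n+1)) A) :=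
  {v | ∃ γ : Exp n, ∃ k, ∃ α ∈ P k, v = (monomial γ (1:A)) • gb α k}

lemma monSmul_allProd (γ : Exp n) {x : κ → MvPolynomial (Fin (n+1)) A}
    (hx : x ∈ Submodule.span A (AllProdSet P gb)) :
    (monomial γ (1:A)) • x ∈ Submodule.span A (AllProdSet P gb) := by
  apply monSmul_span _ x hx
  rintro v ⟨γ'', k, α, hα, rfl⟩
  rw [monSmul_comp]
  exact Submodule.subset_span ⟨γ + γ'', k, α, hα, rfl⟩

lemma smul_allProd (p : MvPolynomial (Fin (n+1)) A) {x : κ → MvPolynomial (Fin (n+1)) A}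
    (hx : x ∈ Submodule.span A (AllProdSet P gb)) :
    p • x ∈ Submodule.span A (AllProdSet P gb) := by
  have hsum : p • x = ∑ γ ∈ p.support, (MvPolynomial.coeff γ p) • ((monomial γ (1:A)) • x) := by
    conv_lhs => rw [MvPolynomial.as_sum p]
    rw [Finset.sum_smul]
    apply Finset.sum_congr rfl
    intro γ _
    rw [← smul_assoc, MvPolynomial.smul_monomial, smul_eq_mul, mul_one]
  rw [hsum]
  apply Submodule.sum_mem
  intro γ _
  exact Submodule.smul_mem _ _ (monSmul_allProd γ hx)

lemma gmod_le_allProd :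
    (GmodS P gb).restrictScalars A ≤ Submodule.span A (AllProdSet P gb) := by
  intro x hx
  rw [Submodule.restrictScalars_mem, GmodS] at hx
  let W : Submodule (MvPolynomial (Fin (n+1)) A) (κ → MvPolynomial (Fin (n+1)) A) :=
    { carrier := Submodule.span A (AllProdSet P gb)
      add_mem' := fun h1 h2 => Submodule.add_mem _ h1 h2
      zero_mem' := Submodule.zero_mem _
      smul_mem' := fun p x hx => smul_allProd p hx }
  have : Submodule.span (MvPolynomial (Fin (n+1)) A) (GSet P gb) ≤ W := by
    apply Submodule.span_le.mpr
    rintro v ⟨k, α, hα, rfl⟩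
    show gb α k ∈ Submodule.span A (AllProdSet P gb)
    have : gb α k = (monomial (0 : Exp n) (1:A)) • gb α k := by
      rw [monomial_zero', MvPolynomial.C_1, one_smul]
    rw [this]
    exact Submodule.subset_span ⟨0, k, α, hα, rfl⟩
  exact this hx

/-- Projection on the degree-`s` homogeneous component, as an `A`-linear map. -/
noncomputable def projV (d : κ → ℤ) (s : ℤ) :
    (κ → MvPolynomial (Fin (n+1)) A) →ₗ[A] (κ → MvPolynomial (Fin (n+1)) A) :=
  LinearMap.pi (fun k => (if s - d k < 0 then 0
    else homogeneousComponent (s - d k).toNat).comp (LinearMap.proj k))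

lemma projV_apply (f : κ → MvPolynomial (Fin (n+1)) A) (s : ℤ) (k : κ) :
    projV d s f k = if s - d k < 0 then 0
      else homogeneousComponent (s - d k).toNat (f k) := by
  rw [projV, LinearMap.pi_apply, LinearMap.comp_apply]
  by_cases h : s - d k < 0
  · rw [if_pos h, if_pos h]; rfl
  · rw [if_neg h, if_neg h]; rfl

lemma projV_homog_eq {f : κ → MvPolynomial (Fin (n+1)) A} {s : ℤ}
    (hf : f ∈ homogCompV A d s) : projV d s f = f := by
  funext k
  rw [projV_apply]
  by_cases h : s - d k < 0
  · rw [if_pos h]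
    symm
    rw [← MvPolynomial.support_eq_empty]
    apply Finset.eq_empty_of_forall_notMem
    intro β hβ
    have := hf k β hβ
    omega
  · rw [if_neg h]
    apply MvPolynomial.ext
    intro β
    rw [MvPolynomial.coeff_homogeneousComponent]
    by_cases hd : Finsupp.degree β = (s - d k).toNat
    · rw [if_pos hd]
    · rw [if_neg hd]
      by_contra hc
      have hβ : β ∈ (f k).support := MvPolynomial.mem_support_iff.mpr (fun h0 => hc h0.symm)
      have h1 := hf k β hβ
      apply hd
      rw [← degE_eq_degree]
      omega

lemma projV_homog_ne {f : κ → MvPolynomial (Fin (n+1)) A} {s t : ℤ}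
    (hf : f ∈ homogCompV A d t) (hts : t ≠ s) : projV d s f = 0 := by
  funext k
  rw [projV_apply]
  by_cases h : s - d k < 0
  · rw [if_pos h]; rfl
  · rw [if_neg h]
    show homogeneousComponent (s - d k).toNat (f k) = 0
    apply MvPolynomial.ext
    intro β
    rw [MvPolynomial.coeff_homogeneousComponent, MvPolynomial.coeff_zero]
    by_cases hd : Finsupp.degree β = (s - d k).toNat
    · rw [if_pos hd]
      by_contra hc
      have hβ : β ∈ (f k).support := MvPolynomial.mem_support_iff.mpr hc
      have h1 := hf k β hβ
      rw [← degE_eq_degree] at hd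
      omega
    · rw [if_neg hd]

lemma spanGSdeg_le_GmodDeg (hG : IsMarkedSetV d J P gb) {s : ℤ} :
    Submodule.span A (GSdeg d P gb s) ≤ GmodDeg d P gb s := by
  rw [GSdeg_eq_GSQ]
  exact spanGSQ_le_GmodDeg (J := J) hG

/-- Under the degree-bounded hypothesis, `⟨G⟩_s = ⟨G^(s)⟩^A` for every `s`. -/
lemma GmodDeg_le_span (hm : Nonempty κ)
    (hQS : ∀ k, IsMonomialIdeal (J k) ∧ IsPommaretBasis (P k) (J k))
    (hG : IsMarkedSetV d J P gb) (r : ℤ) (hub : ∀ k, ∀ α ∈ P k, (degE α : ℤ) + d k ≤ r)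
    (hC1 : ∀ s : ℤ, s ≤ r + 1 → (GmodS P gb).restrictScalars A ⊓ Submodule.span A (NUTerms A J)
          ⊓ homogCompV A d s = ⊥) (s : ℤ) :
    GmodDeg d P gb s ≤ Submodule.span A (GSdeg d P gb s) := by
  intro h hh
  rw [GmodDeg, Submodule.mem_inf] at hh
  obtain ⟨h1, h2⟩ := hh
  have h3 : h ∈ Submodule.span A (AllProdSet P gb) := gmod_le_allProd h1
  rw [← projV_homog_eq h2]
  have h4 : projV d s h ∈ Submodule.map (projV (A := A) d s)
      (Submodule.span A (AllProdSet P gb)) := Submodule.mem_map_of_mem h3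
  rw [Submodule.map_span] at h4
  revert h4
  apply Submodule.span_le.mpr
  rintro x ⟨v, ⟨γ, k, α, hα, rfl⟩, rfl⟩
  have hvhom : (monomial γ (1:A)) • gb α k
      ∈ homogCompV A d ((degE γ : ℤ) + ((degE α : ℤ) + d k)) :=
    monSmul_homog (hg_homog hG hα) γ
  by_cases hts : (degE γ : ℤ) + ((degE α : ℤ) + d k) = s
  · rw [SetLike.mem_coe, projV_homog_eq (hts ▸ hvhom)]
    exact prodMem hQS hG r hub hC1 s (mu (Bb (κ := κ) d s) γ) γ k α le_rfl hα (by omega)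
  · rw [SetLike.mem_coe, projV_homog_ne hvhom hts]
    exact Submodule.zero_mem _

end Decomp

end Aux

open Aux

/-- Corollary `finiteCond`: it suffices to check the marked-basis conditions
in degrees `s ≤ reg(U) + 1`, where `reg(U)` is the maximal degree of an element of `P(U)`. -/
theorem statement9 {n : ℕ} {κ : Type*} [Fintype κ] [DecidableEq κ] (hm : Nonempty κ)
    {A : Type*} [CommRing A] [IsNoetherianRing A]
    (d : κ → ℤ) (J : κ → Set (Exp n)) (P : κ → Finset (Exp n))
    (hQS : ∀ k, IsMonomialIdeal (J k) ∧ IsPommaretBasis (P k) (J k))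
    (gb : Exp n → κ → (κ → MvPolynomial (Fin (n+1)) A))
    (hG : IsMarkedSetV d J P gb)
    (r : ℤ) (hub : ∀ k, ∀ α ∈ P k, (degE α : ℤ) + d k ≤ r)
    (hatt : ∃ k, ∃ α ∈ P k, (degE α : ℤ) + d k = r) :
    (MarkedBasisProp d J P gb ↔
      ∀ s : ℤ, s ≤ r + 1 →
        (GmodS P gb).restrictScalars A ⊓ Submodule.span A (NUTerms A J)
          ⊓ homogCompV A d s = ⊥) ∧
    ((∀ s : ℤ, s ≤ r + 1 →
        (GmodS P gb).restrictScalars A ⊓ Submodule.span A (NUTerms A J)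
          ⊓ homogCompV A d s = ⊥) ↔
      (∀ s : ℤ, s ≤ r + 1 →
        GmodDeg d P gb s = Submodule.span A (GSdeg d P gb s))) := by
  constructor
  · constructor
    · -- marked basis → N(U,⟨G⟩)ₛ = 0
      intro hMB s _
      rw [eq_bot_iff]
      intro x hx
      rw [Submodule.mem_inf, Submodule.mem_inf] at hx
      obtain ⟨⟨hxg, hxN⟩, hxh⟩ := hx
      have hx1 : x ∈ GmodDeg d P gb s := by
        rw [GmodDeg, Submodule.mem_inf]; exact ⟨hxg, hxh⟩
      have hx2 : x ∈ Submodule.span A (NUTermsDeg A d J s) :=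
        mem_spanNdeg_of hxh (fun l β hβ => mem_spanNUT_coeff hxN hβ)
      have h2 := (hMB s).2
      rw [eq_bot_iff] at h2
      exact h2 (Submodule.mem_inf.mpr ⟨hx1, hx2⟩)
    · -- N(U,⟨G⟩)ₛ = 0 for s ≤ r+1 → marked basis
      intro hC1 s
      constructor
      · apply le_antisymm
        · intro f hf
          exact (sup_le_sup_right (spanGSdeg_le_GmodDeg hG) _)
            (homog_le_red hQS hG s hf)
        · apply sup_le
          · rw [GmodDeg]; exact inf_le_right
          · exact spanNdeg_le_homog
      · rw [eq_bot_iff]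
        intro x hx
        rw [Submodule.mem_inf] at hx
        obtain ⟨hx1, hx2⟩ := hx
        have hx3 := GmodDeg_le_span hm hQS hG r hub hC1 s hx1
        have hx4 : ∀ l β, β ∈ J l → MvPolynomial.coeff β (x l) = 0 :=
          fun l β hβ => mem_spanNUT_coeff (spanNdeg_le_spanNUT hx2) hβ
        have := span_GS_cancel hm hQS hG hx3 hx4
        simp [this]
  · constructor
    · -- N(U,⟨G⟩)ₛ = 0 for s ≤ r+1 → ⟨G⟩ₛ = ⟨G^(s)⟩ for s ≤ r+1
      intro hC1 s _
      exact le_antisymm (GmodDeg_le_span hm hQS hG r hub hC1 s) (spanGSdeg_le_GmodDeg hG)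
    · -- ⟨G⟩ₛ = ⟨G^(s)⟩ for s ≤ r+1 → N(U,⟨G⟩)ₛ = 0 for s ≤ r+1
      intro hC2 s hs
      rw [eq_bot_iff]
      intro x hx
      rw [Submodule.mem_inf, Submodule.mem_inf] at hx
      obtain ⟨⟨hxg, hxN⟩, hxh⟩ := hx
      have hx1 : x ∈ GmodDeg d P gb s := by
        rw [GmodDeg, Submodule.mem_inf]; exact ⟨hxg, hxh⟩
      rw [hC2 s hs] at hx1
      have hx4 : ∀ l β, β ∈ J l → MvPolynomial.coeff β (x l) = 0 :=
        fun l β hβ => mem_spanNUT_coeff hxN hβ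
      have := span_GS_cancel hm hQS hG hx1 hx4
      simp [this]


end MB
end
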